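/- arXiv:2006.07715 — 11 statements merged into one kernel-verified Lean document; each statement's English description precedes it below -/
import Mathlib

section
/- Let X be a full additive subcategory of an abelian category A satisfying: (B1) X is generating; (B2) any A ∈ A with Hom_A(A, X) = 0 for all X ∈ X is zero. Then every morphism g in X that is an epimorphism in the category X (i.e. right-cancellable among morphisms of X) is an epimorphism in A. -/
open CategoryTheory CategoryTheory.Limits

universe w v u

variable {A : Type u} [Category.{v} A] [Abelian A]

/-- `k : a ⟶ b` is a weak kernel of `f : b ⟶ c` relative to the full subcategory `X`. -/
def IsWeakKernelIn (X : Set A) {a b c : A} (k : a ⟶ b) (f : b ⟶ c) : Prop :=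
  k ≫ f = 0 ∧ ∀ ⦃t : A⦄, t ∈ X → ∀ l : t ⟶ b, l ≫ f = 0 → ∃ m : t ⟶ a, m ≫ k = l

/-- `h : b ⟶ c` is a weak cokernel of `k : a ⟶ b` relative to the full subcategory `X`. -/
def IsWeakCokernelIn (X : Set A) {a b c : A} (h : b ⟶ c) (k : a ⟶ b) : Prop :=
  k ≫ h = 0 ∧ ∀ ⦃t : A⦄, t ∈ X → ∀ l : b ⟶ t, k ≫ l = 0 → ∃ m : c ⟶ t, h ≫ m = l

/-- `g : x ⟶ a` is a right `X`-approximation of `a`. -/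
def IsRightApprox (X : Set A) {x a : A} (g : x ⟶ a) : Prop :=
  x ∈ X ∧ ∀ ⦃t : A⦄, t ∈ X → ∀ h : t ⟶ a, ∃ k : t ⟶ x, k ≫ g = h

/-- `g : a ⟶ x` is a left `X`-approximation of `a`. -/
def IsLeftApprox (X : Set A) {a x : A} (g : a ⟶ x) : Prop :=
  x ∈ X ∧ ∀ ⦃t : A⦄, t ∈ X → ∀ h : a ⟶ t, ∃ k : x ⟶ t, g ≫ k = h

/-- `X` is a generating subcategory: every object is a quotient of an object of `X`. -/
def Generating (X : Set A) : Prop := ∀ a : A, ∃ x ∈ X, ∃ p : x ⟶ a, Epi p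

/-- `X` is a cogenerating subcategory: every object embeds into an object of `X`. -/
def Cogenerating (X : Set A) : Prop := ∀ a : A, ∃ x ∈ X, ∃ i : a ⟶ x, Mono i

/-- Every object admits a right `X`-approximation. -/
def ContravariantlyFinite (X : Set A) : Prop :=
  ∀ a : A, ∃ (x : A) (g : x ⟶ a), IsRightApprox X g

/-- Every object admits a left `X`-approximation. -/
def CovariantlyFinite (X : Set A) : Prop :=
  ∀ a : A, ∃ (x : A) (g : a ⟶ x), IsLeftApprox X g

/-- `X` is functorially finite. -/
def FunctoriallyFinite (X : Set A) : Prop :=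
  ContravariantlyFinite X ∧ CovariantlyFinite X

/-- If `X` is generating (B1) and every object with no nonzero morphism to `X` is zero
(B2), then any morphism of `X` which is an epimorphism in the category `X` is an
epimorphism in `A`. -/
theorem epi_of_epi_in_subcategory (X : Set A)
    (hB1 : Generating X)
    (hB2 : ∀ a : A, (∀ x ∈ X, ∀ φ : a ⟶ x, φ = 0) → IsZero a)
    {x1 x0 : A} (h1 : x1 ∈ X) (h0 : x0 ∈ X) (g : x1 ⟶ x0)
    (hepi : ∀ ⦃t : A⦄, t ∈ X → ∀ u v : x0 ⟶ t, g ≫ u = g ≫ v → u = v) :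
    Epi g := by
  have hz : IsZero (cokernel g) := by
    apply hB2
    intro x hx φ
    have h0' : g ≫ (cokernel.π g ≫ φ) = g ≫ 0 := by
      simp [← Category.assoc]
    have := hepi hx (cokernel.π g ≫ φ) 0 h0'
    rwa [← cancel_epi (cokernel.π g), Limits.comp_zero]
  have : cokernel.π g = 0 := hz.eq_of_tgt _ _
  exact Abelian.epi_of_cokernel_π_eq_zero g this
end

section
/- Let X be an additive category with weak kernels in which every epimorphism is a weak cokernel. Let F be a finitely presented functor on X admitting a presentation X(-,X₁) → X(-,X₀) → F → 0 induced by an epimorphism f : X₁ → X₀ in X. Then for any other presentation X(-,X₁') → X(-,X₀') → F → 0 induced by a morphism f' : X₁' → X₀', the morphism f' is an epimorphism in X. -/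
open CategoryTheory CategoryTheory.Limits

universe v u

variable {C : Type u} [Category.{v} C] [Preadditive C] [HasFiniteBiproducts C]

/-- `f : A ⟶ B` is a weak kernel of `g : B ⟶ X` -/
def IsWeakKernel {A B X : C} (f : A ⟶ B) (g : B ⟶ X) : Prop :=
  f ≫ g = 0 ∧ ∀ ⦃T : C⦄ (l : T ⟶ B), l ≫ g = 0 → ∃ k : T ⟶ A, k ≫ f = l

/-- `h : B ⟶ X` is a weak cokernel of `f : A ⟶ B` -/
def IsWeakCokernel {A B X : C} (h : B ⟶ X) (f : A ⟶ B) : Prop :=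
  f ≫ h = 0 ∧ ∀ ⦃T : C⦄ (l : B ⟶ T), f ≫ l = 0 → ∃ k : X ⟶ T, h ≫ k = l

/-- `C` has weak kernels. -/
def HasWeakKernels : Prop :=
  ∀ ⦃a b : C⦄ (f : a ⟶ b), ∃ (c : C) (k : c ⟶ a), IsWeakKernel k f

/-- Every epimorphism of `C` is a weak cokernel. -/
def EpiIsWeakCokernel : Prop :=
  ∀ ⦃a b : C⦄ (f : a ⟶ b), Epi f → ∃ (c : C) (g : c ⟶ a), IsWeakCokernel f g

variable (C) in
/-- A functor `F : Cᵒᵖ ⥤ Ab` is finitely presented if it is the cokernel of a morphism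
between representable functors. -/
def IsFP (F : Cᵒᵖ ⥤ AddCommGrpCat.{v}) : Prop :=
  ∃ (X₁ X₀ : C) (f : X₁ ⟶ X₀) (p : preadditiveYoneda.obj X₀ ⟶ F)
    (w : preadditiveYoneda.map f ≫ p = 0),
    Nonempty (IsColimit (CokernelCofork.ofπ p w))

variable (C) in
/-- A functor `F : Cᵒᵖ ⥤ Ab` is effaceable if it admits a presentation induced by an
epimorphism of `C`. -/
def IsEff (F : Cᵒᵖ ⥤ AddCommGrpCat.{v}) : Prop :=
  ∃ (X₁ X₀ : C) (f : X₁ ⟶ X₀), Epi f ∧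
    ∃ (p : preadditiveYoneda.obj X₀ ⟶ F) (w : preadditiveYoneda.map f ≫ p = 0),
      Nonempty (IsColimit (CokernelCofork.ofπ p w))


section Aux

variable {C : Type u} [Category.{v} C] [Preadditive C]

/-- From a presentation of `F` induced by `f : X₁ ⟶ X₀`, we get, for every `A : C`,
surjectivity of `p.app (op A)` and exactness at the middle term. -/
lemma presentation_exact_app {X₁ X₀ : C} (f : X₁ ⟶ X₀) {F : Cᵒᵖ ⥤ AddCommGrpCat.{v}}
    (p : preadditiveYoneda.obj X₀ ⟶ F) (w : preadditiveYoneda.map f ≫ p = 0)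
    (h : IsColimit (CokernelCofork.ofπ p w)) (A : C) :
    (∀ x : F.obj (Opposite.op A), ∃ u : A ⟶ X₀, p.app (Opposite.op A) u = x) ∧
    (∀ l : A ⟶ X₀, p.app (Opposite.op A) l = 0 → ∃ t : A ⟶ X₁, t ≫ f = l) := by
  let E := (evaluation Cᵒᵖ AddCommGrpCat.{v}).obj (Opposite.op A)
  have hE : IsColimit ((CokernelCofork.ofπ p w).map E) :=
    CokernelCofork.mapIsColimit _ h E
  have hw : E.map (preadditiveYoneda.map f) ≫ E.map p = 0 := by
    rw [← E.map_comp, w, E.map_zero]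
  let S : ShortComplex AddCommGrpCat.{v} :=
    ShortComplex.mk (E.map (preadditiveYoneda.map f)) (E.map p) hw
  have hexact : S.Exact := S.exact_of_g_is_cokernel hE
  have hepi : Epi (E.map p) := epi_of_isColimit_cofork hE
  constructor
  · intro x
    exact (AddCommGrpCat.epi_iff_surjective (E.map p)).1 hepi x
  · intro l hl
    obtain ⟨t, ht⟩ := S.ab_exact_iff.1 hexact l hl
    exact ⟨t, ht⟩

end Aux

/-- If `F` admits a presentation induced by an epimorphism of `C`, then the morphism
inducing any other presentation of `F` is also an epimorphism. -/
theorem epi_of_presentation_of_eff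
    (hwk : _root_.HasWeakKernels (C := C)) (hewc : EpiIsWeakCokernel (C := C))
    (F : Cᵒᵖ ⥤ AddCommGrpCat.{v})
    {X₁ X₀ : C} (f : X₁ ⟶ X₀) (hf : Epi f)
    (p : preadditiveYoneda.obj X₀ ⟶ F) (w : preadditiveYoneda.map f ≫ p = 0)
    (hp : Nonempty (IsColimit (CokernelCofork.ofπ p w)))
    {X₁' X₀' : C} (f' : X₁' ⟶ X₀')
    (p' : preadditiveYoneda.obj X₀' ⟶ F) (w' : preadditiveYoneda.map f' ≫ p' = 0)
    (hp' : Nonempty (IsColimit (CokernelCofork.ofπ p' w'))) :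
    Epi f' := by
  obtain ⟨hc⟩ := hp
  obtain ⟨hc'⟩ := hp'
  -- lift the identity through the other presentation
  obtain ⟨u, hu⟩ := (presentation_exact_app f p w hc X₀').1 (p'.app (Opposite.op X₀') (𝟙 X₀'))
  obtain ⟨v, hv⟩ := (presentation_exact_app f' p' w' hc' X₀).1 (p.app (Opposite.op X₀) (𝟙 X₀))
  -- naturality, elementwise
  have nat : ∀ {Y Z : C} (a : Y ⟶ Z) (b : Z ⟶ X₀'),
      p'.app (Opposite.op Y) (a ≫ b) = F.map a.op (p'.app (Opposite.op Z) b) := by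
    intro Y Z a b
    have := congrArg (fun φ => φ b) (p'.naturality a.op)
    first
    | exact this
    | exact this.symm
  have nat₀ : ∀ {Y Z : C} (a : Y ⟶ Z) (b : Z ⟶ X₀),
      p.app (Opposite.op Y) (a ≫ b) = F.map a.op (p.app (Opposite.op Z) b) := by
    intro Y Z a b
    have := congrArg (fun φ => φ b) (p.naturality a.op)
    first
    | exact this
    | exact this.symm
  -- (u ≫ v - 𝟙) is killed by p', hence factors through f'
  have h1 : p'.app (Opposite.op X₀') (u ≫ v - 𝟙 X₀') = 0 := by
    have e1 : p'.app (Opposite.op X₀') (u ≫ v) = p'.app (Opposite.op X₀') (𝟙 X₀') := by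
      rw [nat u v, hv, ← nat₀ u (𝟙 X₀), Category.comp_id, hu]
    exact (map_sub (p'.app (Opposite.op X₀')).hom (u ≫ v) (𝟙 X₀')).trans ((congrArg (fun z => z - _) e1).trans (sub_self _))
  obtain ⟨s, hs⟩ := (presentation_exact_app f' p' w' hc' X₀').2 _ h1
  -- f ≫ v is killed by p', hence factors through f'
  have h2 : p'.app (Opposite.op X₁) (f ≫ v) = 0 := by
    rw [nat f v, hv, ← nat₀ f (𝟙 X₀), Category.comp_id]
    have := congrArg (fun φ => φ.app (Opposite.op X₁) (𝟙 X₁)) w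
    have e : ((preadditiveYoneda.map f).app (Opposite.op X₁)) (𝟙 X₁) = f := Category.id_comp f
    rw [← e]
    exact this
  obtain ⟨r, hr⟩ := (presentation_exact_app f' p' w' hc' X₁).2 _ h2
  -- conclude
  rw [Preadditive.epi_iff_cancel_zero]
  intro T g hg
  have hvg : v ≫ g = 0 := by
    have : f ≫ v ≫ g = 0 := by rw [← Category.assoc, ← hr, Category.assoc, hg, comp_zero]
    exact (Preadditive.epi_iff_cancel_zero f).1 hf T (v ≫ g) this
  calc g = (u ≫ v - (u ≫ v - 𝟙 X₀')) ≫ g := by simp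
    _ = (u ≫ v) ≫ g - (s ≫ f') ≫ g := by rw [hs, Preadditive.sub_comp]
    _ = 0 := by simp only [Category.assoc, hvg, hg, comp_zero, sub_self]
end

section
/- Let X be an additive category with weak kernels in which every epimorphism is a weak cokernel. Let eff X denote the full subcategory of mod X consisting of functors F admitting a presentation X(-,X₁) → X(-,X₀) → F → 0 with X₁ → X₀ an epimorphism in X. Then F ∈ eff X if and only if Hom(F, X(-,X)) = 0 for all X ∈ X. -/
open CategoryTheory CategoryTheory.Limits

universe v u

variable {C : Type u} [Category.{v} C] [Preadditive C] [HasFiniteBiproducts C]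

lemma preadditiveYoneda_map_eq_zero_iff {X Y : C} (f : X ⟶ Y) :
    preadditiveYoneda.map f = 0 ↔ f = 0 := by
  constructor
  · intro h
    have := congrArg (fun (α : preadditiveYoneda.obj X ⟶ preadditiveYoneda.obj Y) =>
      α.app (Opposite.op X) (𝟙 X)) h
    exact (Category.id_comp f).symm.trans this
  · rintro rfl
    ext Z x
    simp

/-- A finitely presented functor is effaceable if and only if it admits no nonzero
morphism to a representable functor. -/
theorem isEff_iff_hom_to_representable_zero
    (hwk : _root_.HasWeakKernels (C := C)) (hewc : EpiIsWeakCokernel (C := C))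
    (F : Cᵒᵖ ⥤ AddCommGrpCat.{v}) (hF : IsFP C F) :
    IsEff C F ↔ ∀ (X : C) (φ : F ⟶ preadditiveYoneda.obj X), φ = 0 := by
  constructor
  · rintro ⟨Y₁, Y₀, g, hg, q, wq, ⟨hq⟩⟩ X φ
    have hqe : Epi q :=
      ⟨fun a b h => Cofork.IsColimit.hom_ext hq (by simpa using h)⟩
    obtain ⟨h, hh⟩ := preadditiveYoneda.map_surjective (q ≫ φ)
    have hz : preadditiveYoneda.map (g ≫ h) = 0 := by
      rw [Functor.map_comp, hh, ← Category.assoc, wq, zero_comp]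
    have hgh : g ≫ h = 0 := (preadditiveYoneda_map_eq_zero_iff _).mp hz
    have h0 : h = 0 := by
      rw [← cancel_epi g, comp_zero]; exact hgh
    rw [← cancel_epi q, comp_zero, ← hh, h0]
    exact (preadditiveYoneda_map_eq_zero_iff _).mpr rfl
  · intro hφ
    obtain ⟨X₁, X₀, f, p, w, ⟨hc⟩⟩ := hF
    have hepi : Epi f := by
      constructor
      intro Z a b hab
      suffices hz : ∀ (g : X₀ ⟶ Z), f ≫ g = 0 → g = 0 by
        have := hz (a - b) (by rw [Preadditive.comp_sub, hab, sub_self])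
        exact sub_eq_zero.mp this
      intro g hg
      have wg : preadditiveYoneda.map f ≫ preadditiveYoneda.map g = 0 := by
        rw [← Functor.map_comp, hg, (preadditiveYoneda_map_eq_zero_iff _).mpr rfl]
      obtain ⟨φ, hφ'⟩ := CokernelCofork.IsColimit.desc' hc (preadditiveYoneda.map g) wg
      have : preadditiveYoneda.map g = 0 := by
        rw [← hφ', hφ Z φ, comp_zero]
      exact (preadditiveYoneda_map_eq_zero_iff _).mp this
    exact ⟨X₁, X₀, f, hepi, p, w, ⟨hc⟩⟩
end

section
/- Let X be an additive category with weak kernels in which every epimorphism is a weak cokernel, and let F ∈ eff X (i.e. F is a finitely presented functor admitting a presentation by an epimorphism of X). Then Ext¹_{mod X}(F, X(-,X)) = 0 for all X ∈ X. -/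
open CategoryTheory CategoryTheory.Limits

universe v u

variable {C : Type u} [Category.{v} C] [Preadditive C] [HasFiniteBiproducts C]

theorem additive_of_presentation {X₁ X₀ : C} (f : X₁ ⟶ X₀) {E : Cᵒᵖ ⥤ AddCommGrpCat.{v}}
    (c : preadditiveYoneda.obj X₀ ⟶ E) (w : preadditiveYoneda.map f ≫ c = 0)
    (hc : IsColimit (CokernelCofork.ofπ c w)) : E.Additive := by
  have hepi : Epi c := ⟨fun u v h => Cofork.IsColimit.hom_ext hc h⟩
  constructor
  intro A B g g'
  have hsurj : Function.Surjective (c.app A) :=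
    (AddCommGrpCat.epi_iff_surjective _).1 inferInstance
  have hnat : ∀ (k : A ⟶ B) (x : A.unop ⟶ X₀),
      E.map k (c.app A x) = c.app B (k.unop ≫ x) := by
    intro k x
    have := CategoryTheory.ConcreteCategory.congr_hom (c.naturality k) x
    dsimp at this
    exact this.symm
  ext y
  obtain ⟨x, rfl⟩ := hsurj y
  simp only [AddMonoidHom.add_apply, hnat, unop_add, Preadditive.add_comp, map_add]
  have k1 := hnat (g + g') x
  have k2 := hnat g x
  have k3 := hnat g' x
  have key : ∀ x : A.unop ⟶ X₀, c.app B ((g + g').unop ≫ x) =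
      c.app B (g.unop ≫ x) + c.app B (g'.unop ≫ x) := fun x => by
    rw [unop_add, Preadditive.add_comp]
    exact map_add _ _ _
  exact k1.trans ((key x).trans (by rw [← k2, ← k3]; rfl))

theorem exists_yoneda_lift {E F : Cᵒᵖ ⥤ AddCommGrpCat.{v}} [E.Additive] (p : E ⟶ F) (hp : Epi p)
    {X₀ : C} (π : preadditiveYoneda.obj X₀ ⟶ F) :
    ∃ q : preadditiveYoneda.obj X₀ ⟶ E, q ≫ p = π := by
  have : Epi p := hp
  have hsurj : Function.Surjective (p.app (Opposite.op X₀)) :=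
    (AddCommGrpCat.epi_iff_surjective _).1 inferInstance
  obtain ⟨e, he⟩ := hsurj (π.app (Opposite.op X₀) (𝟙 X₀))
  refine ⟨{ app := fun Y => AddCommGrpCat.ofHom (AddMonoidHom.mk' (fun (g : Y.unop ⟶ X₀) => E.map g.op e) ?_), naturality := ?_ }, ?_⟩
  · intro g g'
    show E.map (Quiver.Hom.op ((g + g' : Y.unop ⟶ X₀))) e = _
    exact ConcreteCategory.congr_hom ((congrArg E.map (CategoryTheory.op_add C (g : Y.unop ⟶ X₀) (g' : Y.unop ⟶ X₀))).trans E.map_add) e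
  · intro Y Z h
    ext (g : Y.unop ⟶ X₀)
    show E.map (h.unop ≫ g).op e = E.map h (E.map g.op e)
    rw [← CategoryTheory.comp_apply, ← E.map_comp]
    congr 1
  · ext Y (g : Y.unop ⟶ X₀)
    show p.app Y (E.map g.op e) = π.app Y g
    have h1 := CategoryTheory.ConcreteCategory.congr_hom (p.naturality g.op) e
    have h2 := CategoryTheory.ConcreteCategory.congr_hom (π.naturality g.op) (𝟙 X₀)
    simp only [CategoryTheory.comp_apply] at h1 h2
    rw [h1, he]
    refine (ConcreteCategory.congr_hom (π.naturality g.op) (𝟙 X₀)).symm.trans ?_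
    show (π.app Y) (g ≫ 𝟙 X₀) = (π.app Y) g
    rw [Category.comp_id]

/-- If `F` is effaceable, then `Ext¹(F, X(-,X)) = 0` in `mod C`: every short exact
sequence `0 ⟶ X(-,X) ⟶ E ⟶ F ⟶ 0` of finitely presented functors splits. -/
theorem ext_one_vanishes_of_eff
    (hwk : _root_.HasWeakKernels (C := C)) (hewc : EpiIsWeakCokernel (C := C))
    (F : Cᵒᵖ ⥤ AddCommGrpCat.{v}) (hF : IsEff C F) (X : C)
    (E : Cᵒᵖ ⥤ AddCommGrpCat.{v}) (hE : IsFP C E)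
    (i : preadditiveYoneda.obj X ⟶ E) (p : E ⟶ F) (w : i ≫ p = 0)
    (hi : Mono i) (hp : Epi p) (hex : (ShortComplex.mk i p w).Exact) :
    ∃ r : E ⟶ preadditiveYoneda.obj X, i ≫ r = 𝟙 _ := by

  obtain ⟨X₁, X₀, f, hf, π, wπ, ⟨hcolim⟩⟩ := hF
  obtain ⟨E₁, E₀, e0, cE, wE, ⟨hcolimE⟩⟩ := hE
  have hEadd : E.Additive := additive_of_presentation e0 cE wE hcolimE
  obtain ⟨q, hq⟩ := exists_yoneda_lift p hp π
  have hlift : (preadditiveYoneda.map f ≫ q) ≫ (ShortComplex.mk i p w).g = 0 := by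
    dsimp
    rw [Category.assoc, hq, wπ]
  have hmono : Mono (ShortComplex.mk i p w).f := hi
  obtain ⟨s, hs⟩ := hex.lift' _ hlift
  obtain ⟨g, rfl⟩ := preadditiveYoneda.map_surjective s
  have hs' : preadditiveYoneda.map g ≫ i = preadditiveYoneda.map f ≫ q := hs
  obtain ⟨X₂, cm, hwc⟩ := hewc f hf
  have hcg : cm ≫ g = 0 := by
    apply preadditiveYoneda.map_injective
    rw [← cancel_mono i]
    rw [Functor.map_comp, Category.assoc, hs', ← Category.assoc, ← Functor.map_comp, hwc.1]
    simp
  obtain ⟨h, hh⟩ := hwc.2 g hcg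
  have hq' : preadditiveYoneda.map f ≫ (q - preadditiveYoneda.map h ≫ i) = 0 := by
    rw [Preadditive.comp_sub, ← Category.assoc, ← Functor.map_comp, hh, hs', sub_self]
  obtain ⟨t, ht⟩ := CokernelCofork.IsColimit.desc' hcolim (q - preadditiveYoneda.map h ≫ i) hq'
  have ht' : π ≫ t = q - preadditiveYoneda.map h ≫ i := ht
  have hπepi : Epi π := ⟨fun u v huv => Cofork.IsColimit.hom_ext hcolim huv⟩
  have htp : t ≫ p = 𝟙 F := by
    rw [← cancel_epi π, ← Category.assoc, ht', Preadditive.sub_comp, Category.assoc, w,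
      comp_zero, sub_zero, hq, Category.comp_id]
  exact ⟨(ShortComplex.Splitting.ofExactOfSection _ hex t htp hi).r,
    (ShortComplex.Splitting.ofExactOfSection _ hex t htp hi).f_r⟩
end

section
/- Let X be an additive category with weak kernels in which every epimorphism is a weak cokernel. Then the full subcategory eff X of mod X, consisting of finitely presented functors admitting a presentation induced by an epimorphism of X, is a Serre subcategory of the abelian category mod X: for every short exact sequence 0 → F₁ → F₂ → F₃ → 0 in mod X, F₂ ∈ eff X if and only if F₁ ∈ eff X and F₃ ∈ eff X. -/
open CategoryTheory CategoryTheory.Limits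

universe v u

variable {C : Type u} [Category.{v} C] [Preadditive C] [HasFiniteBiproducts C]

open Opposite

attribute [local instance] CategoryTheory.Limits.hasBinaryBiproducts_of_finite_biproducts

omit [HasFiniteBiproducts C] in
/-- Naturality of a transformation out of a representable, in element form. -/
private lemma yapp_nat {X₀ : C} {F : Cᵒᵖ ⥤ AddCommGrpCat.{v}}
    (p : preadditiveYoneda.obj X₀ ⟶ F) {Y Z : C} (m : Z ⟶ Y) (g : Y ⟶ X₀) :
    p.app (op Z) (m ≫ g) = F.map m.op (p.app (op Y) g) := by
  exact ConcreteCategory.congr_hom (p.naturality m.op) g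

omit [HasFiniteBiproducts C] in
private lemma yapp_w {X₁ X₀ : C} {F : Cᵒᵖ ⥤ AddCommGrpCat.{v}} {f : X₁ ⟶ X₀}
    {p : preadditiveYoneda.obj X₀ ⟶ F} (w : preadditiveYoneda.map f ≫ p = 0)
    {W : C} (t : W ⟶ X₁) : p.app (op W) (t ≫ f) = 0 := by
  exact ConcreteCategory.congr_hom (congr_app w (op W)) t

/-- The second projection of a weak pullback of an epimorphism is an epimorphism,
provided every epimorphism is a weak cokernel. -/
private lemma epi_weak_pullback (hewc : EpiIsWeakCokernel (C := C))
    {X₁ X₀ X W : C} (f : X₁ ⟶ X₀) (hf : Epi f) (h : X ⟶ X₀)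
    (k : W ⟶ X₁ ⊞ X) (hk : IsWeakKernel k (biprod.desc f (-h))) :
    Epi (k ≫ biprod.snd) := by
  have hu : Epi (biprod.desc f (-h)) := by
    have : Epi f := hf
    infer_instance
  obtain ⟨Z, c, hc⟩ := hewc _ hu
  refine ⟨fun {T} a b hab => ?_⟩
  have hl : (k ≫ biprod.snd) ≫ (a - b) = 0 := by
    rw [Preadditive.comp_sub, hab, sub_self]
  set l := a - b with hldef
  suffices hl0 : l = 0 by
    have := sub_eq_zero.mp (hldef ▸ hl0)
    exact this.symm ▸ rfl
  -- v := biprod.snd ≫ l kills k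
  have hkv : k ≫ biprod.snd ≫ l = 0 := by rw [← Category.assoc]; exact hl
  -- c factors through the weak kernel k
  obtain ⟨s, hs⟩ := hk.2 c hc.1
  have hcv : c ≫ biprod.snd ≫ l = 0 := by
    rw [← hs, Category.assoc, hkv, comp_zero]
  obtain ⟨m, hm⟩ := hc.2 _ hcv
  have hfm : f ≫ m = 0 := by
    have := biprod.inl ≫= hm
    simpa using this
  have hm0 : m = 0 := (cancel_epi f).1 (by rw [hfm, comp_zero])
  have := biprod.inr ≫= hm
  simpa [hm0] using this.symm

/-- Characterization: a finitely presented functor is effaceable iff every element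
is annihilated by an epimorphism. -/
private lemma isEff_iff (hwk : _root_.HasWeakKernels (C := C)) (hewc : EpiIsWeakCokernel (C := C))
    {F : Cᵒᵖ ⥤ AddCommGrpCat.{v}} (hFP : IsFP C F) :
    IsEff C F ↔ ∀ (X : C) (x : F.obj (op X)),
      ∃ (Y : C) (g : Y ⟶ X), Epi g ∧ F.map g.op x = 0 := by
  constructor
  · rintro ⟨X₁, X₀, f, hf, p, w, ⟨hc⟩⟩ X x
    -- p is pointwise surjective
    have hepi : Epi p := epi_of_isColimit_cofork hc
    have hepiapp : Epi (p.app (op X)) := inferInstance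
    obtain ⟨h0el, hh0⟩ := (AddCommGrpCat.epi_iff_surjective _).mp hepiapp x
    let h : X ⟶ X₀ := h0el
    have hh : p.app (op X) h = x := hh0
    -- weak pullback
    obtain ⟨W, k, hk⟩ := hwk (biprod.desc f (-h))
    refine ⟨W, k ≫ biprod.snd, epi_weak_pullback hewc f hf h k hk, ?_⟩
    have hkey : (k ≫ biprod.snd) ≫ h = (k ≫ biprod.fst) ≫ f := by
      have h0 := hk.1
      have h1 : (k ≫ biprod.fst) ≫ f - (k ≫ biprod.snd) ≫ h = 0 := by
        have heq : (k ≫ biprod.fst) ≫ f - (k ≫ biprod.snd) ≫ h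
            = k ≫ biprod.desc f (-h) := by
          simp [biprod.desc_eq, Preadditive.comp_add, Preadditive.comp_neg,
            sub_eq_add_neg, Category.assoc]
        rw [heq, h0]
      exact (sub_eq_zero.mp h1).symm
    calc F.map (k ≫ biprod.snd).op x
        = F.map (k ≫ biprod.snd).op (p.app (op X) h) := by rw [hh]
      _ = p.app (op W) ((k ≫ biprod.snd) ≫ h) := (yapp_nat p _ h).symm
      _ = p.app (op W) ((k ≫ biprod.fst) ≫ f) := by rw [hkey]
      _ = 0 := yapp_w w _
  · intro hpt
    obtain ⟨X₁, X₀, f, p, w, ⟨hc⟩⟩ := hFP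
    obtain ⟨Y, g, hg, hgx⟩ := hpt X₀ (p.app (op X₀) (𝟙 X₀))
    have hpg : p.app (op Y) g = 0 := by
      have := yapp_nat p g (𝟙 X₀)
      rw [Category.comp_id] at this
      rw [this, hgx]
    have hw' : preadditiveYoneda.map (biprod.desc f g) ≫ p = 0 := by
      ext Z m
      change (unop Z ⟶ X₁ ⊞ Y) at m
      have : m ≫ biprod.desc f g = m ≫ biprod.fst ≫ f + m ≫ biprod.snd ≫ g := by
        rw [biprod.desc_eq, Preadditive.comp_add]
      show p.app Z (m ≫ biprod.desc f g) = 0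
      rw [this]; erw [map_add]
      have h1 : p.app Z (m ≫ biprod.fst ≫ f) = 0 := by
        rw [← Category.assoc]; exact yapp_w w _
      have h2 : p.app Z (m ≫ biprod.snd ≫ g) = 0 := by
        rw [← Category.assoc, yapp_nat p (m ≫ biprod.snd) g, hpg, map_zero]
      rw [h1, h2, add_zero]
    refine ⟨X₁ ⊞ Y, X₀, biprod.desc f g, by infer_instance, p, hw', ⟨?_⟩⟩
    have key : ∀ {Z' : Cᵒᵖ ⥤ AddCommGrpCat.{v}} (q : preadditiveYoneda.obj X₀ ⟶ Z'),
        preadditiveYoneda.map (biprod.desc f g) ≫ q = 0 → preadditiveYoneda.map f ≫ q = 0 := by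
      intro Z' q hq
      have hf' : preadditiveYoneda.map f
          = preadditiveYoneda.map (biprod.inl ≫ biprod.desc f g) := by
        rw [biprod.inl_desc]
      rw [hf', preadditiveYoneda.map_comp, Category.assoc, hq, comp_zero]
    exact CokernelCofork.IsColimit.ofπ p hw'
      (fun {Z'} q hq => hc.desc (CokernelCofork.ofπ q (key q hq)))
      (fun {Z'} q hq => Cofork.IsColimit.π_desc hc)
      (fun {Z'} q hq m hm => by
        apply Cofork.IsColimit.hom_ext hc
        show p ≫ m = p ≫ _
        rw [hm]
        exact (Cofork.IsColimit.π_desc (t := CokernelCofork.ofπ q (key q hq)) hc).symm)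

/-- `eff C` is a Serre subcategory of `mod C`: for any short exact sequence
`0 ⟶ F₁ ⟶ F₂ ⟶ F₃ ⟶ 0` of finitely presented functors, the middle term is
effaceable iff the outer terms are. -/
theorem eff_serre_subcategory
    (hwk : _root_.HasWeakKernels (C := C)) (hewc : EpiIsWeakCokernel (C := C))
    (F₁ F₂ F₃ : Cᵒᵖ ⥤ AddCommGrpCat.{v})
    (h₁ : IsFP C F₁) (h₂ : IsFP C F₂) (h₃ : IsFP C F₃)
    (i : F₁ ⟶ F₂) (p : F₂ ⟶ F₃) (w : i ≫ p = 0)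
    (hi : Mono i) (hp : Epi p) (hex : (ShortComplex.mk i p w).Exact) :
    IsEff C F₂ ↔ IsEff C F₁ ∧ IsEff C F₃ := by
  have hSE : (ShortComplex.mk i p w).ShortExact :=
    { exact := hex, mono_f := hi, epi_g := hp }
  have hSEX : ∀ X : Cᵒᵖ,
      ((ShortComplex.mk i p w).map ((evaluation Cᵒᵖ AddCommGrpCat.{v}).obj X)).ShortExact :=
    fun X => hSE.map_of_exact _
  have hinj : ∀ (X : Cᵒᵖ), Function.Injective (i.app X) := fun X => by
    have := (hSEX X).mono_f
    exact (AddCommGrpCat.mono_iff_injective _).mp this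
  have hsurj : ∀ (X : Cᵒᵖ), Function.Surjective (p.app X) := fun X => by
    have := (hSEX X).epi_g
    exact (AddCommGrpCat.epi_iff_surjective _).mp this
  have hexact : ∀ (X : Cᵒᵖ) (x : F₂.obj X), p.app X x = 0 →
      ∃ y : F₁.obj X, i.app X y = x := fun X => by
    have := (hSEX X).exact
    rw [ShortComplex.ab_exact_iff] at this
    exact this
  rw [isEff_iff hwk hewc h₁, isEff_iff hwk hewc h₂, isEff_iff hwk hewc h₃]
  constructor
  · intro h2
    constructor
    · intro X x
      obtain ⟨Y, g, hg, hgx⟩ := h2 X (i.app (op X) x)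
      refine ⟨Y, g, hg, hinj (op Y) ?_⟩
      have hnat : i.app (op Y) (F₁.map g.op x) = F₂.map g.op (i.app (op X) x) :=
        ConcreteCategory.congr_hom (i.naturality g.op) x
      rw [hnat, hgx, map_zero]
    · intro X z
      obtain ⟨x, hx⟩ := hsurj (op X) z
      obtain ⟨Y, g, hg, hgx⟩ := h2 X x
      refine ⟨Y, g, hg, ?_⟩
      have hnat : p.app (op Y) (F₂.map g.op x) = F₃.map g.op (p.app (op X) x) :=
        ConcreteCategory.congr_hom (p.naturality g.op) x
      rw [← hx, ← hnat, hgx, map_zero]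
  · rintro ⟨ha, hb⟩ X x
    obtain ⟨Y, g, hg, hgz⟩ := hb X (p.app (op X) x)
    have hnat : p.app (op Y) (F₂.map g.op x) = F₃.map g.op (p.app (op X) x) :=
      ConcreteCategory.congr_hom (p.naturality g.op) x
    have : p.app (op Y) (F₂.map g.op x) = 0 := by rw [hnat, hgz]
    obtain ⟨x₁, hx₁⟩ := hexact (op Y) _ this
    obtain ⟨Y', g', hg', hg'x⟩ := ha Y x₁
    refine ⟨Y', g' ≫ g, epi_comp _ _, ?_⟩
    have hcomp : F₂.map (g' ≫ g).op x = F₂.map g'.op (F₂.map g.op x) := by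
      rw [op_comp, F₂.map_comp]; rfl
    rw [hcomp, ← hx₁]
    have hnat' : F₂.map g'.op (i.app (op Y) x₁) = i.app (op Y') (F₁.map g'.op x₁) :=
      (ConcreteCategory.congr_hom (i.naturality g'.op) x₁).symm
    rw [hnat', hg'x, map_zero]
end

section
/- Let X be an additive category with weak kernels in which every epimorphism is a weak cokernel, and let φ : F₀ → F₁ be a morphism in mod X with Ker φ ∈ eff X and Coker φ ∈ eff X. Then for every X ∈ X, precomposition with φ gives an isomorphism Hom(F₁, X(-,X)) → Hom(F₀, X(-,X)). -/
open CategoryTheory CategoryTheory.Limits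

universe v u

variable {C : Type u} [Category.{v} C] [Preadditive C] [HasFiniteBiproducts C]

/-! ### Auxiliary lemmas -/

lemma epi_of_isColimit_cokernelCofork {D : Type*} [Category D] [HasZeroMorphisms D]
    {A B Q : D} {f : A ⟶ B} {p : B ⟶ Q} {w : f ≫ p = 0}
    (hc : IsColimit (CokernelCofork.ofπ p w)) : Epi p :=
  ⟨fun u v h => Cofork.IsColimit.hom_ext hc (by simpa using h)⟩

omit [HasFiniteBiproducts C] in
lemma preadditiveYoneda_map_zero_s8 {A B : C} :
    preadditiveYoneda.map (0 : A ⟶ B) =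
      (0 : preadditiveYoneda.obj A ⟶ preadditiveYoneda.obj B) := by
  ext Y g; simp

omit [HasFiniteBiproducts C] in
/-- Any morphism from an effaceable functor to a representable functor vanishes. -/
lemma eff_hom_zero {G : Cᵒᵖ ⥤ AddCommGrpCat.{v}} (hG : IsEff C G) (X : C)
    (ψ : G ⟶ preadditiveYoneda.obj X) : ψ = 0 := by
  obtain ⟨X₁, X₀, f, hf, p, w, ⟨hc⟩⟩ := hG
  haveI := hf
  haveI : Epi p := epi_of_isColimit_cokernelCofork hc
  obtain ⟨g, hg⟩ := preadditiveYoneda.map_surjective (p ≫ ψ)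
  have h1 : preadditiveYoneda.map (f ≫ g) = 0 := by
    rw [Functor.map_comp, hg, ← Category.assoc, w, zero_comp]
  have h2 : f ≫ g = 0 := preadditiveYoneda.map_injective (by rw [h1, preadditiveYoneda_map_zero_s8])
  have h3 : g = 0 := zero_of_epi_comp f h2
  rw [← cancel_epi p, comp_zero, ← hg, h3, preadditiveYoneda_map_zero_s8]

omit [HasFiniteBiproducts C] in
/-- Effaceability is invariant under isomorphism. -/
lemma isEff_of_iso {F G : Cᵒᵖ ⥤ AddCommGrpCat.{v}} (α : F ≅ G) (h : IsEff C F) : IsEff C G := by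
  obtain ⟨X₁, X₀, f, hf, p, w, ⟨hc⟩⟩ := h
  refine ⟨X₁, X₀, f, hf, p ≫ α.hom, by rw [← Category.assoc, w, zero_comp], ⟨?_⟩⟩
  exact IsColimit.ofIsoColimit hc (Cofork.ext α (by simp))

omit [HasFiniteBiproducts C] in
/-- A quotient of an additive functor is additive. -/
lemma additive_of_epi {G H : Cᵒᵖ ⥤ AddCommGrpCat.{v}} [G.Additive] (π : G ⟶ H) [Epi π] :
    H.Additive := by
  constructor
  intro A B f g
  have n : ∀ (h : A ⟶ B) (x : G.obj A), H.map h (π.app A x) = π.app B (G.map h x) := by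
    intro h x
    have := ConcreteCategory.congr_hom (π.naturality h) x
    simp only [comp_apply] at this
    exact this.symm
  refine AddCommGrpCat.ext fun y => ?_
  obtain ⟨x, rfl⟩ := (AddCommGrpCat.epi_iff_surjective (π.app A)).mp inferInstance y
  calc H.map (f + g) (π.app A x) = π.app B (G.map (f + g) x) := n _ x
    _ = π.app B (G.map f x + G.map g x) := by rw [Functor.map_add]; rfl
    _ = π.app B (G.map f x) + π.app B (G.map g x) := map_add _ _ _
    _ = H.map f (π.app A x) + H.map g (π.app A x) := by rw [n f x, n g x]
    _ = (H.map f + H.map g) (π.app A x) := rfl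

omit [HasFiniteBiproducts C] in
/-- Representable functors lift against epimorphisms with additive source. -/
lemma lift_along_epi {G H : Cᵒᵖ ⥤ AddCommGrpCat.{v}} [G.Additive] (π : G ⟶ H) [Epi π]
    (X₀ : C) (p : preadditiveYoneda.obj X₀ ⟶ H) :
    ∃ e : preadditiveYoneda.obj X₀ ⟶ G, e ≫ π = p := by
  obtain ⟨x, hx⟩ := (AddCommGrpCat.epi_iff_surjective (π.app (Opposite.op X₀))).mp inferInstance
      (p.app (Opposite.op X₀) (𝟙 X₀))
  have hmap : ∀ {Y : Cᵒᵖ} (g g' : Y.unop ⟶ X₀),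
      G.map (g + g').op x = G.map g.op x + G.map g'.op x := by
    intro Y g g'
    rw [op_add, Functor.map_add]
    rfl
  let e : preadditiveYoneda.obj X₀ ⟶ G :=
    { app := fun Y => AddCommGrpCat.ofHom (AddMonoidHom.mk'
        (fun (g : Y.unop ⟶ X₀) => G.map g.op x) (fun g g' => hmap g g'))
      naturality := by
        intro Y Y' h
        refine AddCommGrpCat.ext fun g => ?_
        show G.map ((h.unop ≫ g)).op x = G.map h (G.map g.op x)
        have key : ∀ g' : Y.unop ⟶ X₀, G.map ((h.unop ≫ g')).op x = G.map h (G.map g'.op x) := by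
          intro g'
          rw [op_comp, Quiver.Hom.op_unop, Functor.map_comp]
          rfl
        exact key g }
  refine ⟨e, NatTrans.ext (funext fun Y => AddCommGrpCat.ext fun g => ?_)⟩
  show π.app Y (G.map g.op x) = p.app Y g
  have h1 := ConcreteCategory.congr_hom (π.naturality g.op) x
  simp only [comp_apply] at h1
  have h2 := ConcreteCategory.congr_hom (p.naturality g.op) (𝟙 X₀)
  calc π.app Y (G.map g.op x) = H.map g.op (π.app (Opposite.op X₀) x) := h1
    _ = H.map g.op (p.app (Opposite.op X₀) (𝟙 X₀)) := by rw [hx]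
    _ = p.app Y ((preadditiveYoneda.obj X₀).map g.op (𝟙 X₀)) := h2.symm
    _ = p.app Y g := by
        congr 1
        show g.op.unop ≫ 𝟙 X₀ = g
        simp
        rfl

omit [HasFiniteBiproducts C] in
/-- An extension of a representable functor by an effaceable functor splits. -/
lemma retraction_of_eff (hewc : EpiIsWeakCokernel (C := C)) {X : C}
    {E Q' : Cᵒᵖ ⥤ AddCommGrpCat.{v}}
    (m : preadditiveYoneda.obj X ⟶ E) [Mono m]
    (π' : E ⟶ Q') (w : m ≫ π' = 0) (hc : IsColimit (CokernelCofork.ofπ π' w))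
    {X₁ X₀ : C} (f : X₁ ⟶ X₀) (hf : Epi f) (p : preadditiveYoneda.obj X₀ ⟶ Q')
    (wp : preadditiveYoneda.map f ≫ p = 0) (hp : IsColimit (CokernelCofork.ofπ p wp))
    (e : preadditiveYoneda.obj X₀ ⟶ E) (he : e ≫ π' = p) :
    ∃ r : E ⟶ preadditiveYoneda.obj X, m ≫ r = 𝟙 _ := by
  haveI := hf
  haveI : Epi p := ⟨fun u v h => Cofork.IsColimit.hom_ext hp (by simpa using h)⟩
  have hk : IsLimit (KernelFork.ofι m (CokernelCofork.condition (CokernelCofork.ofπ π' w))) :=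
    Abelian.monoIsKernelOfCokernel (CokernelCofork.ofπ π' w) hc
  obtain ⟨t, ht⟩ := KernelFork.IsLimit.lift' hk (preadditiveYoneda.map f ≫ e)
    (by show _ ≫ π' = 0; rw [Category.assoc, he, wp])
  rw [Fork.ι_ofι] at ht
  obtain ⟨u, hu⟩ := preadditiveYoneda.map_surjective t
  obtain ⟨X₂, g, hgf, hfac⟩ := hewc f hf
  have hgu : g ≫ u = 0 := by
    have : preadditiveYoneda.map (g ≫ u) ≫ m = 0 := by
      rw [Functor.map_comp, Category.assoc, hu, ht, ← Category.assoc, ← Functor.map_comp,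
        hgf, preadditiveYoneda_map_zero_s8, zero_comp]
    have h0 : preadditiveYoneda.map (g ≫ u) = 0 :=
      (cancel_mono m).mp (by rw [this, zero_comp])
    exact preadditiveYoneda.map_injective (by rw [h0, preadditiveYoneda_map_zero_s8])
  obtain ⟨vv, hv⟩ := hfac u hgu
  have key : preadditiveYoneda.map f ≫ (e - preadditiveYoneda.map vv ≫ m) = 0 := by
    rw [Preadditive.comp_sub, ← Category.assoc, ← Functor.map_comp, hv, hu, ht, sub_self]
  obtain ⟨s, hs⟩ := CokernelCofork.IsColimit.desc' hp (e - preadditiveYoneda.map vv ≫ m) key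
  have hsπ : s ≫ π' = 𝟙 Q' := by
    rw [← cancel_epi p]
    have hps : p ≫ s = e - preadditiveYoneda.map vv ≫ m := hs
    rw [← Category.assoc, hps]
    simp only [Preadditive.sub_comp, Category.assoc, he, w, comp_zero, sub_zero, Category.comp_id]
  obtain ⟨r, hr⟩ := KernelFork.IsLimit.lift' hk (𝟙 E - π' ≫ s)
    (by show _ ≫ π' = 0; rw [Preadditive.sub_comp, Category.id_comp, Category.assoc, hsπ,
      Category.comp_id, sub_self])
  rw [Fork.ι_ofι] at hr
  refine ⟨r, ?_⟩
  have hmrm : (m ≫ r) ≫ m = 𝟙 (preadditiveYoneda.obj X) ≫ m := by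
    rw [Category.assoc, hr, Preadditive.comp_sub, Category.comp_id, Category.id_comp,
      ← Category.assoc, w, zero_comp, sub_zero]
  exact (cancel_mono m).mp hmrm

omit [HasFiniteBiproducts C] in
/-- A morphism to a representable functor extends along a monomorphism with effaceable
cokernel. -/
lemma extend_along_mono (hewc : EpiIsWeakCokernel (C := C)) {X : C}
    {I F₁ : Cᵒᵖ ⥤ AddCommGrpCat.{v}} [F₁.Additive]
    (i : I ⟶ F₁) [Mono i] (hQ : IsEff C (cokernel i)) (β : I ⟶ preadditiveYoneda.obj X) :
    ∃ ψ : F₁ ⟶ preadditiveYoneda.obj X, i ≫ ψ = β := by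
  let Y := preadditiveYoneda.obj X
  let d : I ⟶ Y ⊞ F₁ := biprod.lift β (-i)
  let E := cokernel d
  let inl' : Y ⟶ E := biprod.inl ≫ cokernel.π d
  let inr' : F₁ ⟶ E := biprod.inr ≫ cokernel.π d
  have comm : β ≫ inl' = i ≫ inr' := by
    have hd : (β ≫ biprod.inl + (-i) ≫ biprod.inr) ≫ cokernel.π d = 0 := by
      rw [← biprod.lift_eq]; exact cokernel.condition d
    simp only [Preadditive.add_comp, Preadditive.neg_comp, Category.assoc] at hd
    have := sub_eq_zero.mp (by simpa [sub_eq_add_neg] using hd)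
    simpa [inl', inr', Category.assoc] using this
  have hcolim : IsColimit (PushoutCocone.mk inl' inr' comm) := by
    refine PushoutCocone.IsColimit.mk comm
      (fun s => cokernel.desc d (biprod.desc s.inl s.inr) ?_)
      (fun s => ?_) (fun s => ?_) (fun s mσ h1 h2 => ?_)
    · rw [biprod.lift_desc]
      simp [Preadditive.neg_comp, s.condition]
    · simp [inl', Category.assoc]
    · simp [inr', Category.assoc]
    · rw [← cancel_epi (cokernel.π d)]
      apply biprod.hom_ext'
      · simpa [inl'] using h1
      · simpa [inr'] using h2
  have hpo : IsPushout β i inl' inr' := IsPushout.of_isColimit hcolim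
  haveI : Mono inl' := by
    have h := hpo.inl_isoPushout_hom
    have : Mono (inl' ≫ hpo.isoPushout.hom) := by rw [h]; infer_instance
    exact mono_of_mono inl' hpo.isoPushout.hom
  have hdesc : d ≫ biprod.desc 0 (cokernel.π i) = 0 := by
    rw [biprod.lift_desc]
    simp
  let π' : E ⟶ cokernel i := cokernel.desc d (biprod.desc 0 (cokernel.π i)) hdesc
  have w : inl' ≫ π' = 0 := by simp [inl', π']
  have hinr : inr' ≫ π' = cokernel.π i := by simp [inr', π']
  haveI : Epi π' := by
    have : Epi (inr' ≫ π') := by rw [hinr]; infer_instance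
    exact epi_of_epi inr' π'
  have hc : IsColimit (CokernelCofork.ofπ π' w) := by
    refine CokernelCofork.IsColimit.ofπ' π' w (fun {T} k hk => ?_)
    have hik : i ≫ inr' ≫ k = 0 := by
      rw [← Category.assoc, ← comm, Category.assoc, hk, comp_zero]
    refine ⟨cokernel.desc i (inr' ≫ k) hik, ?_⟩
    rw [← cancel_epi (cokernel.π d)]
    apply biprod.hom_ext'
    · simpa [π', inl'] using hk.symm
    · simp [π', inr']
  obtain ⟨X₁, X₀, f, hf, p, wp, ⟨hp⟩⟩ := hQ
  obtain ⟨e₁, he₁⟩ := lift_along_epi (cokernel.π i) X₀ p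
  have he : (e₁ ≫ inr') ≫ π' = p := by rw [Category.assoc, hinr, he₁]
  obtain ⟨r, hr⟩ := retraction_of_eff hewc inl' π' w hc f hf p wp hp (e₁ ≫ inr') he
  refine ⟨inr' ≫ r, ?_⟩
  rw [← Category.assoc, ← comm, Category.assoc, hr, Category.comp_id]

/-- If `φ : F₀ ⟶ F₁` has effaceable kernel and cokernel, then precomposition with `φ`
is an isomorphism `Hom(F₁, X(-,X)) ≅ Hom(F₀, X(-,X))` for all `X`. -/
theorem hom_bijective_of_ker_coker_eff
    (hwk : _root_.HasWeakKernels (C := C)) (hewc : EpiIsWeakCokernel (C := C))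
    (F₀ F₁ : Cᵒᵖ ⥤ AddCommGrpCat.{v}) (h₀ : IsFP C F₀) (h₁ : IsFP C F₁)
    (φ : F₀ ⟶ F₁) (hker : IsEff C (kernel φ)) (hcoker : IsEff C (cokernel φ)) (X : C) :
    Function.Bijective (fun ψ : F₁ ⟶ preadditiveYoneda.obj X => φ ≫ ψ) := by
  constructor
  · intro ψ ψ' h
    simp only at h
    have h0 : φ ≫ (ψ - ψ') = 0 := by rw [Preadditive.comp_sub, h, sub_self]
    have ht : cokernel.π φ ≫ cokernel.desc φ (ψ - ψ') h0 = ψ - ψ' := cokernel.π_desc _ _ _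
    have hz : cokernel.desc φ (ψ - ψ') h0 = 0 := eff_hom_zero hcoker X _
    rw [hz, comp_zero] at ht
    exact sub_eq_zero.mp ht.symm
  · intro α
    have hκ : kernel.ι φ ≫ α = 0 := eff_hom_zero hker X (kernel.ι φ ≫ α)
    let β : Abelian.coimage φ ⟶ preadditiveYoneda.obj X := cokernel.desc (kernel.ι φ) α hκ
    have hβ : Abelian.coimage.π φ ≫ β = α := cokernel.π_desc _ _ _
    have fac : Abelian.coimage.π φ ≫ Abelian.factorThruCoimage φ = φ := Abelian.coimage.fac φ
    obtain ⟨X₁', X₀', f', p', w', ⟨hc'⟩⟩ := h₁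
    haveI : Epi p' := epi_of_isColimit_cokernelCofork hc'
    haveI : F₁.Additive := additive_of_epi p'
    have hQ : IsEff C (cokernel (Abelian.factorThruCoimage φ)) := by
      refine isEff_of_iso ?_ hcoker
      exact cokernelIsoOfEq fac.symm ≪≫
        cokernelEpiComp (Abelian.coimage.π φ) (Abelian.factorThruCoimage φ)
    obtain ⟨ψ, hψ⟩ := extend_along_mono hewc (Abelian.factorThruCoimage φ) hQ β
    refine ⟨ψ, ?_⟩
    show φ ≫ ψ = α
    rw [← fac, Category.assoc, hψ, hβ]
end

section
/- Let X be an additive category with weak kernels in which every epimorphism is a weak cokernel. If an object F of the quotient category (mod X)/(eff X) satisfies Hom(F, Φ(X)) = 0 for all X ∈ X, then F ≅ 0. (Here Φ is the composite of the Yoneda embedding and the quotient functor.) -/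
open CategoryTheory CategoryTheory.Limits

set_option linter.unusedSectionVars false

universe v u

variable {C : Type u} [Category.{v} C] [Preadditive C] [HasFiniteBiproducts C]

lemma preadditiveYoneda_map_zero {X Y : C} :
    preadditiveYoneda.map (0 : X ⟶ Y) = 0 := by
  ext Z g
  simp

lemma isFP_preadditiveYoneda (X : C) : IsFP C (preadditiveYoneda.obj X) :=
  ⟨X, X, 0, 𝟙 _, by rw [preadditiveYoneda_map_zero]; simp,
    ⟨CokernelCofork.IsColimit.ofId _ preadditiveYoneda_map_zero⟩⟩

variable (C) in
/-- The category `mod C` of finitely presented functors. -/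
abbrev ModCat := ObjectProperty.FullSubcategory (IsFP C)

variable (C) in
/-- The class of morphisms of `mod C` whose kernel and cokernel (computed in the ambient
functor category) are effaceable. -/
def effW : MorphismProperty (ModCat C) := fun F G φ =>
  IsEff C (kernel (show F.obj ⟶ G.obj from φ.hom)) ∧
    IsEff C (cokernel (show F.obj ⟶ G.obj from φ.hom))

variable (C) in
/-- The Yoneda embedding `C ⥤ mod C`. -/
def yonedaMod : C ⥤ ModCat C :=
  ObjectProperty.lift _ preadditiveYoneda isFP_preadditiveYoneda


-- ====== auxiliary development ======
open Opposite ZeroObject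

lemma isEff_of_iso_s11 {G G' : Cᵒᵖ ⥤ AddCommGrpCat.{v}} (hG : IsEff C G) (e : G ≅ G') :
    IsEff C G' := by
  obtain ⟨X₁, X₀, f, hf, p, w, ⟨hc⟩⟩ := hG
  refine ⟨X₁, X₀, f, hf, p ≫ e.hom, by rw [← Category.assoc, w, Limits.zero_comp], ⟨?_⟩⟩
  exact IsColimit.ofIsoColimit hc (Cofork.ext e (by simp))

lemma isEff_cokernel_of_epi {Z₁ Z₀ : C} (e : Z₁ ⟶ Z₀) (he : Epi e) :
    IsEff C (cokernel (preadditiveYoneda.map e)) :=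
  ⟨Z₁, Z₀, e, he, cokernel.π _, cokernel.condition _, ⟨cokernelIsCokernel _⟩⟩

lemma isEff_exists_iso {G : Cᵒᵖ ⥤ AddCommGrpCat.{v}} (hG : IsEff C G) :
    ∃ (Z₁ Z₀ : C) (e : Z₁ ⟶ Z₀), Epi e ∧
      Nonempty (cokernel (preadditiveYoneda.map e) ≅ G) := by
  obtain ⟨Z₁, Z₀, e, he, p, w, ⟨hc⟩⟩ := hG
  exact ⟨Z₁, Z₀, e, he, ⟨IsColimit.coconePointUniqueUpToIso (cokernelIsCokernel _) hc⟩⟩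

lemma isEff_of_isZero {G : Cᵒᵖ ⥤ AddCommGrpCat.{v}} (hG : IsZero G) : IsEff C G := by
  have hπ : cokernel.π (preadditiveYoneda.map (𝟙 (0 : C))) = 0 := by
    calc cokernel.π (preadditiveYoneda.map (𝟙 (0 : C)))
        = preadditiveYoneda.map (𝟙 (0 : C)) ≫ cokernel.π _ := by
          rw [preadditiveYoneda.map_id, Category.id_comp]
      _ = 0 := cokernel.condition _
  have hz : IsZero (cokernel (preadditiveYoneda.map (𝟙 (0 : C)))) := by
    rw [IsZero.iff_id_eq_zero, ← cancel_epi (cokernel.π (preadditiveYoneda.map (𝟙 (0 : C)))), hπ]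
    simp
  exact isEff_of_iso_s11 (isEff_cokernel_of_epi _ inferInstance) (hz.iso hG)

lemma hom_eq_zero_of_isEff {G : Cᵒᵖ ⥤ AddCommGrpCat.{v}} (hG : IsEff C G) {X : C}
    (u : G ⟶ preadditiveYoneda.obj X) : u = 0 := by
  obtain ⟨Z₁, Z₀, e, he, p, w, ⟨hc⟩⟩ := hG
  set g := preadditiveYoneda.preimage (p ≫ u) with hgdef
  have hmg : preadditiveYoneda.map g = p ≫ u := Functor.map_preimage _ _
  have h1 : e ≫ g = 0 := by
    apply preadditiveYoneda.map_injective
    rw [Functor.map_comp, hmg, preadditiveYoneda_map_zero, ← Category.assoc, w, Limits.zero_comp]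
  have h2 : g = 0 := by
    apply (cancel_epi e).1
    rw [h1, comp_zero]
  apply Cofork.IsColimit.hom_ext hc
  simp only [Cofork.π_ofπ]
  rw [comp_zero, ← hmg, h2, preadditiveYoneda_map_zero]

lemma natApp {F G : Cᵒᵖ ⥤ AddCommGrpCat.{v}} (p : F ⟶ G) {T T' : Cᵒᵖ} (q : T ⟶ T')
    (x : F.obj T) : p.app T' (F.map q x) = G.map q (p.app T x) := by
  have := ConcreteCategory.congr_hom (p.naturality q) x
  simp only [CategoryTheory.comp_apply] at this
  exact this

lemma isFP_map_add {F : Cᵒᵖ ⥤ AddCommGrpCat.{v}} (hF : IsFP C F) {T T' : C} (f g : T ⟶ T')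
    (x : F.obj (op T')) : F.map (f + g).op x = F.map f.op x + F.map g.op x := by
  obtain ⟨X₁, X₀, q, p, w, ⟨hc⟩⟩ := hF
  have hp : Epi p := epi_of_isColimit_cofork hc
  have hsurj : Function.Surjective (p.app (op T')) :=
    (AddCommGrpCat.epi_iff_surjective _).1 inferInstance
  obtain ⟨y, hy⟩ := hsurj x
  have nat : ∀ (r : T ⟶ T') (z : (preadditiveYoneda.obj X₀).obj (op T')),
      F.map r.op (p.app (op T') z) = p.app (op T) ((preadditiveYoneda.obj X₀).map r.op z) :=
    fun r z => (natApp p r.op z).symm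
  rw [← hy, nat, nat, nat]
  have hYadd : (preadditiveYoneda.obj X₀).map (f + g).op y =
      (preadditiveYoneda.obj X₀).map f.op y + (preadditiveYoneda.obj X₀).map g.op y := by
    show (f + g) ≫ (y : T' ⟶ X₀) = f ≫ (y : T' ⟶ X₀) + g ≫ (y : T' ⟶ X₀)
    exact Preadditive.add_comp _ _ _ _ _ _
  rw [hYadd, map_add]

lemma exists_yoneda_lift_s11 {B E : Cᵒᵖ ⥤ AddCommGrpCat.{v}}
    (hB : ∀ (T T' : C) (f g : T ⟶ T') (x : B.obj (op T')),
      B.map (f + g).op x = B.map f.op x + B.map g.op x)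
    (π : B ⟶ E) (hπ : Epi π) {Z₀ : C} (φ : preadditiveYoneda.obj Z₀ ⟶ E) :
    ∃ β : preadditiveYoneda.obj Z₀ ⟶ B, β ≫ π = φ := by
  haveI := hπ
  have hsurj : Function.Surjective (π.app (op Z₀)) :=
    (AddCommGrpCat.epi_iff_surjective _).1 inferInstance
  obtain ⟨b₀, hb₀⟩ := hsurj (φ.app (op Z₀) (𝟙 Z₀))
  refine ⟨{ app := fun T => AddCommGrpCat.ofHom (AddMonoidHom.mk'
              (fun f => B.map (f : T.unop ⟶ Z₀).op b₀) (fun f g => hB _ _ f g b₀)),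
            naturality := ?_ }, ?_⟩
  · intro T T' q
    ext f
    show B.map (q.unop ≫ (f : T.unop ⟶ Z₀)).op b₀ = B.map q (B.map (f : T.unop ⟶ Z₀).op b₀)
    exact ConcreteCategory.congr_hom (B.map_comp (f : T.unop ⟶ Z₀).op q) b₀
  · ext T f
    show π.app T (B.map (f : T.unop ⟶ Z₀).op b₀) = φ.app T f
    rw [natApp π (f : T.unop ⟶ Z₀).op b₀, hb₀, ← natApp φ (f : T.unop ⟶ Z₀).op (𝟙 Z₀)]
    congr 1
    show (f : T.unop ⟶ Z₀) ≫ 𝟙 Z₀ = f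
    exact Category.comp_id _

lemma exists_preimage_of_cokernel_app_zero {A' B' : Cᵒᵖ ⥤ AddCommGrpCat.{v}} (τ : A' ⟶ B')
    (T : Cᵒᵖ) (x : B'.obj T) (hx : (cokernel.π τ).app T x = 0) :
    ∃ y : A'.obj T, τ.app T y = x := by
  let S : ShortComplex (Cᵒᵖ ⥤ AddCommGrpCat.{v}) :=
    ShortComplex.mk τ (cokernel.π τ) (cokernel.condition τ)
  have hS : S.Exact := S.exact_of_g_is_cokernel (cokernelIsCokernel τ)
  have hS' : (S.map ((evaluation Cᵒᵖ AddCommGrpCat.{v}).obj T)).Exact := hS.map _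
  exact (ShortComplex.ab_exact_iff _).1 hS' x hx

lemma comp_biprod_desc {P Q R S : Cᵒᵖ ⥤ AddCommGrpCat.{v}} (t : S ⟶ P ⊞ Q)
    (a : P ⟶ R) (b : Q ⟶ R) :
    t ≫ biprod.desc a b = (t ≫ biprod.fst) ≫ a + (t ≫ biprod.snd) ≫ b := by
  have h : biprod.desc a b = biprod.fst ≫ a + biprod.snd ≫ b := by
    apply biprod.hom_ext' <;> simp
  rw [h, Preadditive.comp_add, ← Category.assoc, ← Category.assoc]

set_option maxHeartbeats 1000000 in
lemma exists_extension (hewc : EpiIsWeakCokernel (C := C)) {I B : Cᵒᵖ ⥤ AddCommGrpCat.{v}}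
    (hB : ∀ (T T' : C) (f g : T ⟶ T') (x : B.obj (op T')),
      B.map (f + g).op x = B.map f.op x + B.map g.op x)
    (m : I ⟶ B) (hm : Mono m) (hcm : IsEff C (cokernel m))
    {X : C} (u : I ⟶ preadditiveYoneda.obj X) :
    ∃ v : B ⟶ preadditiveYoneda.obj X, m ≫ v = u := by
  haveI := hm
  obtain ⟨Z₁, Z₀, e, he, ⟨j⟩⟩ := isEff_exists_iso hcm
  obtain ⟨β, hβ⟩ := exists_yoneda_lift_s11 hB (cokernel.π m) inferInstance
    (cokernel.π (preadditiveYoneda.map e) ≫ j.hom)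
  -- α : Y Z₁ ⟶ I with α ≫ m = Y e ≫ β
  have hker : (preadditiveYoneda.map e ≫ β) ≫ cokernel.π m = 0 := by
    rw [Category.assoc, hβ, ← Category.assoc, cokernel.condition, Limits.zero_comp]
  set α := Abelian.monoLift m (preadditiveYoneda.map e ≫ β) hker with hαdef
  have hα : α ≫ m = preadditiveYoneda.map e ≫ β := Abelian.monoLift_comp _ _ _
  -- g : Z₁ ⟶ X with Y g = α ≫ u
  set g := preadditiveYoneda.preimage (α ≫ u) with hgdef
  have hg : preadditiveYoneda.map g = α ≫ u := Functor.map_preimage _ _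
  -- weak cokernel property of e
  obtain ⟨Z₂, d, hd⟩ := hewc e he
  have hdα : preadditiveYoneda.map d ≫ α = 0 := by
    apply (cancel_mono m).1
    rw [Category.assoc, hα, ← Category.assoc, ← Functor.map_comp, hd.1,
      preadditiveYoneda_map_zero, Limits.zero_comp, Limits.zero_comp]
  have hdg : d ≫ g = 0 := by
    apply preadditiveYoneda.map_injective
    rw [Functor.map_comp, hg, preadditiveYoneda_map_zero, ← Category.assoc, hdα,
      Limits.zero_comp]
  obtain ⟨g', hg'⟩ := hd.2 g hdg
  -- the covering γ and the map φ'
  set γ := biprod.desc m β with hγdef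
  haveI hepiγ : Epi γ := by
    apply Preadditive.epi_of_cancel_zero
    intro R χ hχ
    have h1 : m ≫ χ = 0 := by
      rw [← biprod.inl_desc m β, ← hγdef, Category.assoc, hχ, comp_zero]
    have h2 : β ≫ χ = 0 := by
      rw [← biprod.inr_desc m β, ← hγdef, Category.assoc, hχ, comp_zero]
    have h3 : j.hom ≫ cokernel.desc m χ h1 = 0 := by
      apply (cancel_epi (cokernel.π (preadditiveYoneda.map e))).1
      rw [comp_zero, ← Category.assoc, ← hβ, Category.assoc, cokernel.π_desc, h2]
    have h4 : cokernel.desc m χ h1 = 0 := by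
      rw [← Category.id_comp (cokernel.desc m χ h1), ← j.inv_hom_id, Category.assoc, h3,
        comp_zero]
    rw [← cokernel.π_desc m χ h1, h4, comp_zero]
  set φ' := biprod.desc u (preadditiveYoneda.map g') with hφdef
  -- φ' kills the kernel of γ
  have hsum : (kernel.ι γ ≫ biprod.fst) ≫ m + (kernel.ι γ ≫ biprod.snd) ≫ β = 0 := by
    rw [← comp_biprod_desc, ← hγdef, kernel.condition]
  have h5 : (kernel.ι γ ≫ biprod.snd) ≫ cokernel.π (preadditiveYoneda.map e) = 0 := by
    apply (cancel_mono j.hom).1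
    rw [Limits.zero_comp, Category.assoc, ← hβ, ← Category.assoc]
    have : (kernel.ι γ ≫ biprod.snd) ≫ β = -((kernel.ι γ ≫ biprod.fst) ≫ m) :=
      eq_neg_of_add_eq_zero_right hsum
    rw [this, Preadditive.neg_comp, Category.assoc, cokernel.condition, comp_zero, neg_zero]
    
  have hkφ : kernel.ι γ ≫ φ' = 0 := by
    rw [hφdef, comp_biprod_desc]
    ext T x
    have h6 : (cokernel.π (preadditiveYoneda.map e)).app T ((kernel.ι γ ≫ biprod.snd).app T x)
        = 0 := by
      have := ConcreteCategory.congr_hom (congrArg (fun σ => NatTrans.app σ T) h5) x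
      simp only [NatTrans.comp_app, CategoryTheory.comp_apply] at this ⊢
      simpa using this
    obtain ⟨y, hy⟩ := exists_preimage_of_cokernel_app_zero (preadditiveYoneda.map e) T
      ((kernel.ι γ ≫ biprod.snd).app T x) h6
    have key : (kernel.ι γ ≫ biprod.fst).app T x + α.app T y = 0 := by
      have hminj : Function.Injective (m.app T) := (AddCommGrpCat.mono_iff_injective _).1 inferInstance
      apply hminj
      rw [map_add, map_zero]
      have e1 : m.app T (α.app T y) = β.app T ((preadditiveYoneda.map e).app T y) := by
        have := ConcreteCategory.congr_hom (congrArg (fun σ => NatTrans.app σ T) hα) y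
        simpa [NatTrans.comp_app, CategoryTheory.comp_apply] using this
      have e2 := ConcreteCategory.congr_hom (congrArg (fun σ => NatTrans.app σ T) hsum) x
      simp only [NatTrans.comp_app, NatTrans.app_zero, AddMonoidHom.add_apply,
        CategoryTheory.comp_apply, AddMonoidHom.zero_apply] at e2
      rw [e1, hy]
      simpa [NatTrans.comp_app, CategoryTheory.comp_apply] using e2
    have e3 : (preadditiveYoneda.map g').app T ((kernel.ι γ ≫ biprod.snd).app T x)
        = u.app T (α.app T y) := by
      rw [← hy]
      show ((preadditiveYoneda.map e).app T y : T.unop ⟶ Z₀) ≫ g' = u.app T (α.app T y)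
      show ((y : T.unop ⟶ Z₁) ≫ e) ≫ g' = u.app T (α.app T y)
      refine (Category.assoc (y : T.unop ⟶ Z₁) e g').trans ?_
      rw [hg']
      have : (preadditiveYoneda.map g).app T y = u.app T (α.app T y) := by
        have := ConcreteCategory.congr_hom (congrArg (fun σ => NatTrans.app σ T) hg) y
        simpa [NatTrans.comp_app, CategoryTheory.comp_apply] using this
      exact this
    show ((kernel.ι γ ≫ biprod.fst) ≫ u + (kernel.ι γ ≫ biprod.snd) ≫
      preadditiveYoneda.map g').app T x = (0 : kernel γ ⟶ preadditiveYoneda.obj X).app T x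
    simp only [NatTrans.app_add, NatTrans.app_zero, NatTrans.comp_app] at e3 key ⊢
    simp only [AddCommGrpCat.coe_comp, AddCommGrpCat.hom_add_apply,
      Function.comp_apply, AddMonoidHom.add_apply, AddMonoidHom.zero_apply] at e3 key ⊢
    rw [e3, ← map_add, key, map_zero]
    rfl
  -- descend φ' along γ
  refine ⟨Abelian.epiDesc γ φ' hkφ, ?_⟩
  have hv : γ ≫ Abelian.epiDesc γ φ' hkφ = φ' := Abelian.comp_epiDesc _ _ _
  rw [← biprod.inl_desc m β, ← hγdef, Category.assoc, hv, hφdef, biprod.inl_desc]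




lemma effW_precomp_bijective (hewc : EpiIsWeakCokernel (C := C)) {A B : ModCat C}
    (ψ : A ⟶ B) (hψ : effW C ψ) (X : C) :
    Function.Bijective (fun χ : (B.obj ⟶ preadditiveYoneda.obj X) =>
      (show A.obj ⟶ B.obj from ψ.hom) ≫ χ) := by
  set ψ0 : A.obj ⟶ B.obj := ψ.hom with hψ0
  constructor
  · intro χ₁ χ₂ hch
    have hsub : ψ0 ≫ (χ₁ - χ₂) = 0 := by
      rw [Preadditive.comp_sub]
      rw [show ψ0 ≫ χ₁ = ψ0 ≫ χ₂ from hch, sub_self]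
    have hδ : cokernel.desc ψ0 (χ₁ - χ₂) hsub = 0 := hom_eq_zero_of_isEff hψ.2 _
    have : χ₁ - χ₂ = 0 := by
      rw [← cokernel.π_desc ψ0 (χ₁ - χ₂) hsub, hδ, comp_zero]
    exact sub_eq_zero.1 this
  · intro χ
    have h0 : kernel.ι ψ0 ≫ χ = 0 := hom_eq_zero_of_isEff hψ.1 _
    set χ₀ := cokernel.desc (kernel.ι ψ0) χ h0 with hχ₀def
    -- the image inclusion has effaceable cokernel
    have hfac : ψ0 = (Abelian.coimage.π ψ0 ≫ Abelian.coimageImageComparison ψ0) ≫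
        Abelian.image.ι ψ0 := by
      rw [Category.assoc, Abelian.coimage_image_factorisation]
    have heff : IsEff C (cokernel (Abelian.image.ι ψ0)) := by
      refine isEff_of_iso_s11 hψ.2 ?_
      exact (cokernelIsoOfEq hfac) ≪≫
        cokernelEpiComp (Abelian.coimage.π ψ0 ≫ Abelian.coimageImageComparison ψ0)
          (Abelian.image.ι ψ0)
    obtain ⟨v, hv⟩ := exists_extension hewc (fun T T' f g x => isFP_map_add B.property f g x)
      (Abelian.image.ι ψ0) inferInstance heff
      (inv (Abelian.coimageImageComparison ψ0) ≫ χ₀)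
    refine ⟨v, ?_⟩
    show ψ0 ≫ v = χ
    rw [hfac, Category.assoc, Category.assoc, hv, IsIso.hom_inv_id_assoc]
    exact cokernel.π_desc _ _ _

variable (C) in
def effHomFunctor (X : C) : ModCat C ⥤ (Type (max u v))ᵒᵖ where
  obj G := Opposite.op (G.obj ⟶ preadditiveYoneda.obj X)
  map {A B} ψ := Quiver.Hom.op (TypeCat.ofHom (fun χ : (B.obj ⟶ preadditiveYoneda.obj X) =>
    (show A.obj ⟶ B.obj from ψ.hom) ≫ χ))
  map_id A := by
    apply Quiver.Hom.unop_inj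
    apply ConcreteCategory.hom_ext
    intro χ
    exact Category.id_comp χ
  map_comp {A B D} ψ₁ ψ₂ := by
    apply Quiver.Hom.unop_inj
    apply ConcreteCategory.hom_ext
    intro χ
    exact (Category.assoc (show A.obj ⟶ B.obj from ψ₁.hom) (show B.obj ⟶ D.obj from ψ₂.hom) χ).symm

lemma effHomFunctor_inverts (hewc : EpiIsWeakCokernel (C := C)) (X : C) :
    (effW C).IsInvertedBy (effHomFunctor C X) := by
  intro A B ψ hψ
  have hbij := effW_precomp_bijective hewc ψ hψ X
  have hiso : IsIso (C := Type (max u v)) (X := (B.obj ⟶ preadditiveYoneda.obj X))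
      (Y := (A.obj ⟶ preadditiveYoneda.obj X))
      (TypeCat.ofHom (fun χ : (B.obj ⟶ preadditiveYoneda.obj X) =>
        (show A.obj ⟶ B.obj from ψ.hom) ≫ χ)) :=
    (isIso_iff_bijective _).2 hbij
  exact (isIso_op_iff _).2 hiso

lemma localization_isZero {E : Type*} [Category E] [Limits.HasZeroMorphisms E]
    (W : MorphismProperty E) (Z : E) (hZ : (𝟙 Z : Z ⟶ Z) = 0) : IsZero (W.Q.obj Z) := by
  let zh : ∀ (T T' : W.Localization), T ⟶ T' := fun T T' =>
    (W.Q.map (0 : ((Localization.Construction.objEquiv W).symm T) ⟶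
      ((Localization.Construction.objEquiv W).symm T')) : T ⟶ T')
  have zh_comp : ∀ {T T' : W.Localization} (φ : T ⟶ T') (S : W.Localization),
      zh S T ≫ φ = zh S T' := by
    let P : MorphismProperty W.Localization := fun T T' φ => ∀ S, zh S T ≫ φ = zh S T'
    haveI : P.IsStableUnderComposition :=
      ⟨fun φ₁ φ₂ h₁ h₂ S => by rw [← Category.assoc, h₁ S, h₂ S]⟩
    have htop : P = ⊤ := by
      apply Localization.Construction.morphismProperty_eq_top
      · intro Xo Yo f S
        show W.Q.map (0 : _ ⟶ Xo) ≫ W.Q.map f = W.Q.map (0 : _ ⟶ Yo)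
        rw [← W.Q.map_comp, Limits.zero_comp]
      · intro Xo Yo w hw S
        haveI : IsIso (W.Q.map w) := W.Q_inverts w hw
        show zh S (W.Q.obj Yo) ≫ Localization.Construction.wInv w hw = zh S (W.Q.obj Xo)
        apply (cancel_mono (W.Q.map w)).1
        rw [Category.assoc,
          show W.Q.map w = (Localization.Construction.wIso w hw).hom from rfl,
          Iso.inv_hom_id, Category.comp_id]
        show W.Q.map (0 : _ ⟶ Yo) = W.Q.map (0 : _ ⟶ Xo) ≫ W.Q.map w
        rw [← W.Q.map_comp, Limits.zero_comp]
    intro T T' φ S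
    have hP : P φ := by rw [htop]; trivial
    exact hP S
  have zh_comp' : ∀ {T T' : W.Localization} (φ : T ⟶ T') (S : W.Localization),
      φ ≫ zh T' S = zh T S := by
    let P : MorphismProperty W.Localization := fun T T' φ => ∀ S, φ ≫ zh T' S = zh T S
    haveI : P.IsStableUnderComposition :=
      ⟨fun φ₁ φ₂ h₁ h₂ S => by rw [Category.assoc, h₂ S, h₁ S]⟩
    have htop : P = ⊤ := by
      apply Localization.Construction.morphismProperty_eq_top
      · intro Xo Yo f S
        show W.Q.map f ≫ W.Q.map (0 : Yo ⟶ _) = W.Q.map (0 : Xo ⟶ _)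
        rw [← W.Q.map_comp, Limits.comp_zero]
      · intro Xo Yo w hw S
        haveI : IsIso (W.Q.map w) := W.Q_inverts w hw
        show Localization.Construction.wInv w hw ≫ zh (W.Q.obj Xo) S = zh (W.Q.obj Yo) S
        apply (cancel_epi (W.Q.map w)).1
        rw [← Category.assoc,
          show W.Q.map w = (Localization.Construction.wIso w hw).hom from rfl,
          Iso.hom_inv_id, Category.id_comp]
        show W.Q.map (0 : Xo ⟶ _) = W.Q.map w ≫ W.Q.map (0 : Yo ⟶ _)
        rw [← W.Q.map_comp, Limits.comp_zero]
    intro T T' φ S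
    have hP : P φ := by rw [htop]; trivial
    exact hP S
  have hid : (𝟙 (W.Q.obj Z) : _) = zh (W.Q.obj Z) (W.Q.obj Z) := by
    have h1 : (𝟙 (W.Q.obj Z) : _) = W.Q.map (𝟙 Z) := (W.Q.map_id Z).symm
    rw [h1, hZ]
    rfl
  constructor
  · intro T
    refine ⟨⟨⟨zh _ T⟩, fun ψ => ?_⟩⟩
    calc ψ = 𝟙 (W.Q.obj Z) ≫ ψ := (Category.id_comp ψ).symm
      _ = zh (W.Q.obj Z) (W.Q.obj Z) ≫ ψ := by rw [hid]
      _ = zh (W.Q.obj Z) T := zh_comp ψ _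
  · intro T
    refine ⟨⟨⟨zh T _⟩, fun ψ => ?_⟩⟩
    calc ψ = ψ ≫ 𝟙 (W.Q.obj Z) := (Category.comp_id ψ).symm
      _ = ψ ≫ zh (W.Q.obj Z) (W.Q.obj Z) := by rw [hid]
      _ = zh T (W.Q.obj Z) := zh_comp' ψ _



/-- If an object `F` of `(mod C)/(eff C)` has only the zero morphism to every object
`Φ(X)` with `X ∈ C`, then `F` is zero in the quotient. -/
theorem isZero_of_no_hom_to_representables
    (hwk : _root_.HasWeakKernels (C := C)) (hewc : EpiIsWeakCokernel (C := C))
    (F : ModCat C)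
    (h : ∀ (X : C) (φ : (effW C).Q.obj F ⟶ (effW C).Q.obj ((yonedaMod C).obj X)),
      φ = (effW C).Q.map
        (show F ⟶ (yonedaMod C).obj X from
          ObjectProperty.homMk (0 : F.obj ⟶ preadditiveYoneda.obj X))) :
    IsZero ((effW C).Q.obj F) := by
  -- Step 1: every map from `F.obj` to a representable is zero.
  have hom0 : ∀ (R : C) (u : F.obj ⟶ preadditiveYoneda.obj R), u = 0 := by
    intro R u
    have hq := h R ((effW C).Q.map (ObjectProperty.homMk u : F ⟶ (yonedaMod C).obj R))
    have hfac := Localization.Construction.fac (effHomFunctor C R)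
      (effHomFunctor_inverts hewc R)
    have h1 := Functor.congr_hom hfac (ObjectProperty.homMk u : F ⟶ (yonedaMod C).obj R)
    have h2 := Functor.congr_hom hfac (show F ⟶ (yonedaMod C).obj R from
      ObjectProperty.homMk (0 : F.obj ⟶ preadditiveYoneda.obj R))
    rw [Functor.comp_map] at h1 h2
    rw [hq] at h1
    have h4 := h1.symm.trans h2
    have h5 := (cancel_mono (eqToHom (Functor.congr_obj hfac ((yonedaMod C).obj R)))).1
      ((cancel_epi (eqToHom (Functor.congr_obj hfac F).symm)).1 h4)
    have h6 := ConcreteCategory.congr_hom (congrArg Quiver.Hom.unop h5) (𝟙 (preadditiveYoneda.obj R))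
    have h7 : (ObjectProperty.homMk u : F ⟶ (yonedaMod C).obj R).hom ≫ 𝟙 _ =
      (ObjectProperty.homMk (0 : F.obj ⟶ preadditiveYoneda.obj R) : F ⟶ (yonedaMod C).obj R).hom ≫ 𝟙 _ := h6
    simp only [Category.comp_id] at h7
    exact h7
  -- Step 2: `F.obj` is effaceable.
  have hFeff : IsEff C F.obj := by
    obtain ⟨X₁, X₀, f, p, w, ⟨hc⟩⟩ := F.property
    have hf : Epi f := by
      apply Preadditive.epi_of_cancel_zero
      intro R g hg
      have hYfg : preadditiveYoneda.map f ≫ preadditiveYoneda.map g = 0 := by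
        rw [← Functor.map_comp, hg, preadditiveYoneda_map_zero]
      obtain ⟨u', hu'⟩ := CokernelCofork.IsColimit.desc' hc (preadditiveYoneda.map g) hYfg
      have hu0 : u' = 0 := hom0 R u'
      apply preadditiveYoneda.map_injective
      rw [preadditiveYoneda_map_zero, ← hu', hu0, comp_zero]
    exact ⟨X₁, X₀, f, hf, p, w, ⟨hc⟩⟩
  -- Step 3: the zero object of `ModCat`.
  let Zm : ModCat C := (yonedaMod C).obj (0 : C)
  have hZ : IsZero (Zm.obj) := by
    rw [IsZero.iff_id_eq_zero]
    show (𝟙 (preadditiveYoneda.obj (0 : C)) : _) = 0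
    rw [show (𝟙 (preadditiveYoneda.obj (0 : C)) : _) = preadditiveYoneda.map (𝟙 (0 : C)) from
      (preadditiveYoneda.map_id _).symm,
      show (𝟙 (0 : C) : _) = 0 from (isZero_zero C).eq_of_src _ _, preadditiveYoneda_map_zero]
  -- Step 4: the morphism `F ⟶ Zm` lies in `effW`.
  have ht : effW C (show F ⟶ Zm from ObjectProperty.homMk (0 : F.obj ⟶ Zm.obj)) := by
    constructor
    · exact isEff_of_iso_s11 hFeff (kernelZeroIsoSource (X := F.obj) (Y := Zm.obj)).symm
    · exact isEff_of_iso_s11 (isEff_of_isZero hZ)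
        (cokernelZeroIsoTarget (X := F.obj) (Y := Zm.obj)).symm
  haveI : IsIso ((effW C).Q.map (show F ⟶ Zm from ObjectProperty.homMk (0 : F.obj ⟶ Zm.obj))) :=
    (effW C).Q_inverts _ ht
  have hQZ : IsZero ((effW C).Q.obj Zm) :=
    localization_isZero (effW C) Zm (ObjectProperty.hom_ext _ (hZ.eq_of_src _ _))
  exact hQZ.of_iso (asIso ((effW C).Q.map (show F ⟶ Zm from ObjectProperty.homMk (0 : F.obj ⟶ Zm.obj))))
end

section
/- Let X be a full additive subcategory of an abelian category A satisfying: (B1) X is generating; (B2) any object A with Hom(A,X) = 0 for all X ∈ X is zero; (B3) every object admitting a monomorphism into a two-term complex of objects of X (i.e. every A fitting in an exact sequence 0 → A → X₁ → X₀ with X₁, X₀ ∈ X) has a right X-approximation. Then the inclusion X → A sends any sequence X₂ → X₁ → X₀ in X, with X₂ → X₁ a weak kernel in X of X₁ → X₀, to an exact sequence in A. -/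
open CategoryTheory CategoryTheory.Limits

universe w v u

variable {A : Type u} [Category.{v} A] [Abelian A]

/-- Under (B1), (B2), (B3), the inclusion `X ⟶ A` sends weak kernel sequences of `X` to
exact sequences of `A`. -/
theorem weakKernel_sequence_exact (X : Set A)
    (hB1 : Generating X)
    (hB2 : ∀ a : A, (∀ x ∈ X, ∀ φ : a ⟶ x, φ = 0) → IsZero a)
    (hB3 : ∀ a : A,
      (∃ (x₁ : A) (_ : x₁ ∈ X) (x₀ : A) (_ : x₀ ∈ X) (i : a ⟶ x₁) (u : x₁ ⟶ x₀)
        (w : i ≫ u = 0), Mono i ∧ (ShortComplex.mk i u w).Exact) →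
      ∃ (x : A) (g : x ⟶ a), IsRightApprox X g)
    {x₂ x₁ x₀ : A} (h₂ : x₂ ∈ X) (h₁ : x₁ ∈ X) (h₀ : x₀ ∈ X)
    (f : x₂ ⟶ x₁) (g : x₁ ⟶ x₀) (hwk : IsWeakKernelIn X f g) :
    ∃ w : f ≫ g = 0, (ShortComplex.mk f g w).Exact := by
  obtain ⟨w, hfac⟩ := hwk
  refine ⟨w, ?_⟩
  rw [ShortComplex.exact_iff_epi_kernel_lift]
  -- K = kernel g embeds in x₁ ⟶ x₀, so by B3 it has a right X-approximation p
  obtain ⟨x, p, hx, happ⟩ := hB3 (kernel g)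
    ⟨x₁, h₁, x₀, h₀, kernel.ι g, g, kernel.condition g, inferInstance,
      ShortComplex.exact_of_f_is_kernel _ (kernelIsKernel g)⟩
  -- p is epi since kernel g is a quotient of an object of X
  obtain ⟨x', hx', q, hq⟩ := hB1 (kernel g)
  obtain ⟨k, hk⟩ := happ hx' q
  have hp : Epi p := by rw [← hk] at hq; exact epi_of_epi k p
  -- p ≫ kernel.ι g is killed by g, hence factors through f
  obtain ⟨m, hm⟩ := hfac hx (p ≫ kernel.ι g) (by simp)
  have hmu : m ≫ kernel.lift g f w = p := by
    rw [← cancel_mono (kernel.ι g), Category.assoc, kernel.lift_ι, hm]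
  rw [← hmu] at hp
  exact epi_of_epi m _
end

section
/- Let X be a generating, cogenerating, functorially finite full subcategory of an abelian category A, closed under isomorphisms and direct summands, and let d ≥ 1. Suppose Ext^i_A(X, X') = 0 for all X, X' ∈ X and 0 < i < d. Then for every epimorphism f₁ : X₁ → X₀ in X there exists a sequence X_{d+1} → X_d → ⋯ → X₂ → X₁ → X₀ in X, exact in A, such that for each 1 ≤ i ≤ d the map f_{i+1} is a weak kernel of f_i and f_i is a weak cokernel of f_{i+1}. -/
open CategoryTheory CategoryTheory.Limits

universe w v u

variable {A : Type u} [Category.{v} A] [Abelian A]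

section AuxiliaryLemmas

variable [CategoryTheory.HasExt.{w} A]

open DerivedCategory HomologicalComplexUpToQuasiIso in
noncomputable def heartIso [HasDerivedCategory A] :
    DerivedCategory.singleFunctor A 0 ⋙ homologyFunctor A (ComplexShape.up ℤ) 0 ≅ 𝟭 A :=
  Functor.isoWhiskerRight ((SingleFunctors.evaluation _ _ 0).mapIso (singleFunctorsPostcompQIso A))
      (homologyFunctor A (ComplexShape.up ℤ) 0) ≪≫
    Functor.associator _ _ _ ≪≫
    Functor.isoWhiskerLeft (CochainComplex.singleFunctor A 0)
      (homologyFunctorFactors A (ComplexShape.up ℤ) 0) ≪≫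
    HomologicalComplex.homologyFunctorSingleIso A (ComplexShape.up ℤ) 0

open DerivedCategory HomologicalComplexUpToQuasiIso in
lemma splitting_of_extClass_eq_zero {S : ShortComplex A} (hS : S.ShortExact)
    (h : hS.extClass = 0) : ∃ σ : S.X₃ ⟶ S.X₂, σ ≫ S.g = 𝟙 S.X₃ := by
  letI := HasDerivedCategory.standard A
  have hδ : hS.singleδ = 0 := by
    rw [← CategoryTheory.ShortComplex.ShortExact.extClass_hom (hS := hS), h,
      Abelian.Ext.zero_hom]
  have hepi : Epi hS.singleTriangle.mor₂ :=
    Pretriangulated.Triangle.epi₂ _ hS.singleTriangle_distinguished hδ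
  have hsplit : IsSplitEpi hS.singleTriangle.mor₂ := isSplitEpi_of_epi _
  obtain ⟨⟨σ', hσ'⟩⟩ : IsSplitEpi ((DerivedCategory.singleFunctor A 0).map S.g) := hsplit
  -- σ' : single S.X₃ ⟶ single S.X₂, σ' ≫ (singleFunctor A 0).map S.g = 𝟙
  set H : DerivedCategory A ⥤ A := homologyFunctor A (ComplexShape.up ℤ) 0
  set e : DerivedCategory.singleFunctor A 0 ⋙ H ≅ 𝟭 A := (heartIso (A := A))
  refine ⟨(e.inv.app S.X₃ ≫ H.map σ' ≫ e.hom.app S.X₂ : S.X₃ ⟶ S.X₂), ?_⟩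
  have nat : e.hom.app S.X₂ ≫ S.g =
      H.map ((DerivedCategory.singleFunctor A 0).map S.g) ≫ e.hom.app S.X₃ := by
    exact (e.hom.naturality S.g).symm
  rw [Category.assoc, Category.assoc, nat, ← Category.assoc (H.map σ'), ← H.map_comp]
  rw [hσ',
    H.map_id, Category.id_comp, Iso.inv_hom_id_app]
  rfl

lemma extend_of_ext_vanishing {S : ShortComplex A} (hS : S.ShortExact) (t : A)
    (hQ : ∀ e : Abelian.Ext.{w} S.X₃ t 1, e = 0) (l : S.X₁ ⟶ t) :
    ∃ m : S.X₂ ⟶ t, S.f ≫ m = l := by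
  have hmf : Mono S.f := hS.mono_f
  have heg : Epi S.g := hS.epi_g
  let u : t ⟶ pushout l S.f := pushout.inl l S.f
  let r : S.X₂ ⟶ pushout l S.f := pushout.inr l S.f
  let w : pushout l S.f ⟶ S.X₃ := pushout.desc 0 S.g (by rw [comp_zero, S.zero])
  have huw : u ≫ w = 0 := pushout.inl_desc _ _ _
  have hrw : r ≫ w = S.g := pushout.inr_desc _ _ _
  let S' : ShortComplex A := ShortComplex.mk u w huw
  have hmono : Mono S'.f := Abelian.mono_pushout_of_mono_g l S.f
  have hepi : Epi S'.g := epi_of_epi_fac hrw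
  have hcolim : IsColimit (CokernelCofork.ofπ S'.g S'.zero) := by
    refine CokernelCofork.IsColimit.ofπ _ _
      (fun {W} h hh => hS.gIsCokernel.desc (CokernelCofork.ofπ (r ≫ h) ?_))
      (fun {W} h hh => ?_) (fun {W} h hh m hm => ?_)
    · rw [← Category.assoc, ← pushout.condition, Category.assoc, hh, comp_zero]
    · apply pushout.hom_ext
      · rw [pushout.inl_desc_assoc]
        rw [zero_comp]
        first
          | exact hh
          | exact (show (pushout.inl l S.f) ≫ h = 0 from hh).symm
      · rw [pushout.inr_desc_assoc]
        first
          | exact Cofork.IsColimit.π_desc' hS.gIsCokernel _ _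
          | exact (Cofork.IsColimit.π_desc' hS.gIsCokernel _ _).symm
    · have : Epi (S'.g) := hepi
      rw [← cancel_epi S'.g, hm]
      apply pushout.hom_ext
      · rw [pushout.inl_desc_assoc, zero_comp]
        first
          | exact hh
          | exact (show (pushout.inl l S.f) ≫ h = 0 from hh).symm
      · rw [pushout.inr_desc_assoc]
        first
          | exact Cofork.IsColimit.π_desc' hS.gIsCokernel _ _
          | exact (Cofork.IsColimit.π_desc' hS.gIsCokernel _ _).symm
  have hS' : S'.ShortExact :=
    { exact := ShortComplex.exact_of_g_is_cokernel _ hcolim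
      mono_f := hmono, epi_g := hepi }
  obtain ⟨σ, hσ⟩ := splitting_of_extClass_eq_zero hS' (hQ _)
  have hpp : (𝟙 (pushout l S.f) - w ≫ σ) ≫ S'.g = 0 := by
    rw [Preadditive.sub_comp, Category.id_comp, Category.assoc]
    rw [show S'.g = w from rfl] at hσ ⊢
    rw [hσ, Category.comp_id, sub_self]
  obtain ⟨rr, hrr⟩ := KernelFork.IsLimit.lift' hS'.fIsKernel _ hpp
  have hur : u ≫ rr = 𝟙 t := by
    have hrr' : rr ≫ S'.f = 𝟙 (pushout l S.f) - w ≫ σ := hrr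
    rw [← cancel_mono (S'.f), Category.assoc, hrr', Preadditive.comp_sub, Category.comp_id,
      ← Category.assoc, show u ≫ w = 0 from huw, zero_comp, sub_zero, Category.id_comp]
  refine ⟨r ≫ rr, ?_⟩
  rw [← Category.assoc, ← pushout.condition, Category.assoc, hur, Category.comp_id]

end AuxiliaryLemmas

lemma aux_mono_factorThruCoimage {P Q : A} (f : P ⟶ Q) :
    Mono (cokernel.desc (kernel.ι f) f (kernel.condition f)) := by
  have h : cokernel.desc (kernel.ι f) f (kernel.condition f) =
      Abelian.coimageImageComparison f ≫ Abelian.image.ι f := by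
    rw [← cancel_epi (Abelian.coimage.π f)]
    rw [show Abelian.coimage.π f ≫ cokernel.desc (kernel.ι f) f (kernel.condition f) = f from
      cokernel.π_desc _ _ _, Abelian.coimage_image_factorisation]
  rw [h]
  infer_instance


/-- If `X` is generating, cogenerating and functorially finite with
`Ext^i(X, X') = 0` for `0 < i < d`, then every epimorphism `f : X₁ ⟶ X₀` in `X`
extends to an exact sequence `X_{d+1} ⟶ ⋯ ⟶ X₁ ⟶ X₀` in which each `f_{i+1}` is a
weak kernel of `f_i` and each `f_i` is a weak cokernel of `f_{i+1}`. -/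
theorem rigid_sequence_exists [CategoryTheory.HasExt.{w} A] (X : Set A) (d : ℕ) (hd : 1 ≤ d)
    (hiso : ∀ ⦃a b : A⦄, a ∈ X → (a ≅ b) → b ∈ X)
    (hsum : ∀ ⦃a x : A⦄, x ∈ X → ∀ (i : a ⟶ x) (r : x ⟶ a), i ≫ r = 𝟙 a → a ∈ X)
    (hgen : Generating X) (hcog : Cogenerating X) (hff : FunctoriallyFinite X)
    (hext : ∀ x ∈ X, ∀ x' ∈ X, ∀ i : ℕ, 0 < i → i < d →
      Subsingleton (CategoryTheory.Abelian.Ext x x' i))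
    {x₁ x₀ : A} (h₁ : x₁ ∈ X) (h₀ : x₀ ∈ X) (f : x₁ ⟶ x₀) (hf : Epi f) :
    ∃ (Y : ℕ → A) (g : ∀ i, Y (i + 1) ⟶ Y i) (hY0 : Y 0 = x₀) (hY1 : Y 1 = x₁),
      (∀ i ≤ d + 1, Y i ∈ X) ∧
      g 0 = eqToHom hY1 ≫ f ≫ eqToHom hY0.symm ∧
      (∀ i < d, IsWeakKernelIn X (g (i + 1)) (g i) ∧
        IsWeakCokernelIn X (g i) (g (i + 1))) ∧
      (∀ i < d, ∃ w : g (i + 1) ≫ g i = 0, (ShortComplex.mk (g (i + 1)) (g i) w).Exact) := by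
  classical
  choose apObj apHom hap using hff.1
  have hapEpi : ∀ a : A, Epi (apHom a) := by
    intro a
    obtain ⟨x, hx, p, hp⟩ := hgen a
    obtain ⟨k, hk⟩ := (hap a).2 hx p
    exact epi_of_epi_fac hk
  let D : ℕ → Σ' (a b : A), b ⟶ a := fun n =>
    Nat.rec ⟨x₀, x₁, f⟩
      (fun _ T => ⟨T.2.1, apObj (kernel T.2.2), apHom (kernel T.2.2) ≫ kernel.ι T.2.2⟩) n
  let Y : ℕ → A := fun n => (D n).1
  let g : ∀ i, Y (i + 1) ⟶ Y i := fun i => (D i).2.2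
  have hg : ∀ n, g (n + 1) = apHom (kernel (g n)) ≫ kernel.ι (g n) := fun n => rfl
  have hg0 : g 0 = f := rfl
  have hYX : ∀ n, Y n ∈ X := by
    intro n
    match n with
    | 0 => exact h₀
    | 1 => exact h₁
    | (n+2) => exact (hap (kernel (g n))).1
  -- weak kernels
  have hwk : ∀ n, IsWeakKernelIn X (g (n + 1)) (g n) := by
    intro n
    constructor
    · rw [hg n, Category.assoc, kernel.condition, comp_zero]
    · intro t ht l hl
      obtain ⟨k, hk⟩ := (hap (kernel (g n))).2 ht (kernel.lift (g n) l hl)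
      refine ⟨k, ?_⟩
      rw [hg n, ← Category.assoc, hk, kernel.lift_ι]
  -- exactness
  have hex : ∀ n, ∃ w : g (n + 1) ≫ g n = 0, (ShortComplex.mk (g (n + 1)) (g n) w).Exact := by
    intro n
    refine ⟨(hwk n).1, ?_⟩
    have base : (ShortComplex.mk (kernel.ι (g n)) (g n) (kernel.condition _)).Exact :=
      ShortComplex.exact_of_f_is_kernel _ (kernelIsKernel (g n))
    haveI : Epi (apHom (kernel (g n))) := hapEpi _
    let φ : ShortComplex.mk (g (n + 1)) (g n) (hwk n).1 ⟶
        ShortComplex.mk (kernel.ι (g n)) (g n) (kernel.condition _) :=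
      { τ₁ := apHom (kernel (g n)), τ₂ := 𝟙 _, τ₃ := 𝟙 _,
        comm₁₂ := by rw [Category.comp_id]
        comm₂₃ := by simp }
    haveI : Epi φ.τ₁ := hapEpi _
    haveI : IsIso φ.τ₂ := by dsimp; infer_instance
    haveI : Mono φ.τ₃ := by dsimp; infer_instance
    exact (ShortComplex.exact_iff_of_epi_of_isIso_of_mono φ).mpr base
  -- short exact sequences of coimages
  have hzero : ∀ n, cokernel.desc (kernel.ι (g (n+1))) (g (n+1)) (kernel.condition _) ≫
      cokernel.π (kernel.ι (g n)) = 0 := by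
    intro n
    rw [← cancel_epi (cokernel.π (kernel.ι (g (n+1)))), comp_zero, ← Category.assoc,
      cokernel.π_desc, hg n, Category.assoc, cokernel.condition, comp_zero]
  have hses : ∀ n, (ShortComplex.mk
      (cokernel.desc (kernel.ι (g (n+1))) (g (n+1)) (kernel.condition _))
      (cokernel.π (kernel.ι (g n))) (hzero n)).ShortExact := by
    intro n
    have base : (ShortComplex.mk (kernel.ι (g n)) (cokernel.π (kernel.ι (g n)))
        (cokernel.condition _)).Exact :=
      ShortComplex.exact_of_f_is_kernel _
        (Abelian.monoIsKernelOfCokernel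
          (CokernelCofork.ofπ (cokernel.π (kernel.ι (g n))) (cokernel.condition _))
          (cokernelIsCokernel (kernel.ι (g n))))
    have step1 : (ShortComplex.mk (g (n+1)) (cokernel.π (kernel.ι (g n)))
        (by rw [hg n, Category.assoc, cokernel.condition, comp_zero])).Exact := by
      let φ : ShortComplex.mk (g (n+1)) (cokernel.π (kernel.ι (g n)))
            (by rw [hg n, Category.assoc, cokernel.condition, comp_zero]) ⟶
          ShortComplex.mk (kernel.ι (g n)) (cokernel.π (kernel.ι (g n)))
            (cokernel.condition _) :=
        { τ₁ := apHom (kernel (g n)), τ₂ := 𝟙 _, τ₃ := 𝟙 _,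
          comm₁₂ := by rw [Category.comp_id]
          comm₂₃ := by simp }
      haveI : Epi φ.τ₁ := hapEpi _
      haveI : IsIso φ.τ₂ := by dsimp; infer_instance
      haveI : Mono φ.τ₃ := by dsimp; infer_instance
      exact (ShortComplex.exact_iff_of_epi_of_isIso_of_mono φ).mpr base
    have step2 : (ShortComplex.mk
        (cokernel.desc (kernel.ι (g (n+1))) (g (n+1)) (kernel.condition _))
        (cokernel.π (kernel.ι (g n))) (hzero n)).Exact := by
      let φ : ShortComplex.mk (g (n+1)) (cokernel.π (kernel.ι (g n)))
            (by rw [hg n, Category.assoc, cokernel.condition, comp_zero]) ⟶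
          ShortComplex.mk
            (cokernel.desc (kernel.ι (g (n+1))) (g (n+1)) (kernel.condition _))
            (cokernel.π (kernel.ι (g n))) (hzero n) :=
        { τ₁ := cokernel.π (kernel.ι (g (n+1))), τ₂ := 𝟙 _, τ₃ := 𝟙 _,
          comm₁₂ := by rw [Category.comp_id, cokernel.π_desc]
          comm₂₃ := by simp }
      haveI : Epi φ.τ₁ := by dsimp; infer_instance
      haveI : IsIso φ.τ₂ := by dsimp; infer_instance
      haveI : Mono φ.τ₃ := by dsimp; infer_instance
      exact (ShortComplex.exact_iff_of_epi_of_isIso_of_mono φ).mp step1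
    exact
      { exact := step2
        mono_f := aux_mono_factorThruCoimage (g (n+1))
        epi_g := by infer_instance }
  -- iso in degree 0
  haveI hepi0 : Epi (g 0) := hf
  haveI : Epi (cokernel.desc (kernel.ι (g 0)) (g 0) (kernel.condition _)) :=
    epi_of_epi_fac (cokernel.π_desc (kernel.ι (g 0)) (g 0) (kernel.condition _))
  haveI : Mono (cokernel.desc (kernel.ι (g 0)) (g 0) (kernel.condition _)) :=
    aux_mono_factorThruCoimage (g 0)
  haveI hiso0 : IsIso (cokernel.desc (kernel.ι (g 0)) (g 0) (kernel.condition _)) :=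
    isIso_of_mono_of_epi _
  -- Ext vanishing
  have hV : ∀ n i, 0 < i → i + n < d → ∀ t, t ∈ X →
      ∀ e : Abelian.Ext.{w} (cokernel (kernel.ι (g n))) t i, e = 0 := by
    intro n
    induction n with
    | zero =>
      intro i hi hid t ht e
      haveI := hext _ h₀ _ ht i hi (by omega)
      have h1 : (Abelian.Ext.mk₀
          (inv (cokernel.desc (kernel.ι (g 0)) (g 0) (kernel.condition _)))).comp e
          (zero_add i) = (0 : Abelian.Ext (Y 0) t i) := Subsingleton.elim _ _
      have h2 : e = (Abelian.Ext.mk₀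
          (cokernel.desc (kernel.ι (g 0)) (g 0) (kernel.condition _))).comp
          ((Abelian.Ext.mk₀
            (inv (cokernel.desc (kernel.ι (g 0)) (g 0) (kernel.condition _)))).comp e
            (zero_add i)) (zero_add i) := by
        rw [Abelian.Ext.mk₀_comp_mk₀_assoc, IsIso.hom_inv_id, Abelian.Ext.mk₀_id_comp]
      rw [h2, h1, Abelian.Ext.comp_zero]
    | succ n ih =>
      intro i hi hid t ht e
      have h1 : (hses n).extClass.comp e rfl = 0 := ih (1 + i) (by omega) (by omega) t ht _
      obtain ⟨x₂, hx₂⟩ := Abelian.Ext.contravariant_sequence_exact₁ (hses n) t e rfl h1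
      haveI := hext _ (hYX (n+1)) _ ht i hi (by omega)
      have h2 : x₂ = 0 := Subsingleton.elim _ _
      rw [← hx₂, h2, Abelian.Ext.comp_zero]
  -- weak cokernels
  have hwc : ∀ n, n < d → IsWeakCokernelIn X (g n) (g (n + 1)) := by
    intro n hn
    refine ⟨(hwk n).1, ?_⟩
    intro t ht l hl
    have hιl : kernel.ι (g n) ≫ l = 0 := by
      rw [hg n, Category.assoc] at hl
      exact zero_of_epi_comp (apHom (kernel (g n))) hl
    have hl₁ : cokernel.π (kernel.ι (g n)) ≫ cokernel.desc (kernel.ι (g n)) l hιl = l :=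
      cokernel.π_desc _ _ _
    have hgn : g n = cokernel.π (kernel.ι (g n)) ≫
        cokernel.desc (kernel.ι (g n)) (g n) (kernel.condition _) :=
      (cokernel.π_desc _ _ _).symm
    cases n with
    | zero =>
      refine ⟨inv (cokernel.desc (kernel.ι (g 0)) (g 0) (kernel.condition _)) ≫
        cokernel.desc (kernel.ι (g 0)) l hιl, ?_⟩
      have hcomp : g 0 ≫ inv (cokernel.desc (kernel.ι (g 0)) (g 0) (kernel.condition _)) =
          cokernel.π (kernel.ι (g 0)) := by
        rw [IsIso.comp_inv_eq]
        exact hgn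
      rw [← Category.assoc, hcomp, hl₁]
    | succ k =>
      obtain ⟨m, hm⟩ := extend_of_ext_vanishing (hses k) t
        (fun e => hV k 1 one_pos (by omega) t ht e) (cokernel.desc (kernel.ι (g (k+1))) l hιl)
      refine ⟨m, ?_⟩
      rw [hgn, Category.assoc, hm, hl₁]
  exact ⟨Y, g, rfl, rfl, fun i _ => hYX i,
    by rw [eqToHom_refl, eqToHom_refl, Category.comp_id, Category.id_comp]; exact hg0,
    fun i hi => ⟨hwk i, hwc i hi⟩, fun i _ => hex i⟩
end

section
/- Let X be a generating, cogenerating, functorially finite full subcategory of an abelian category A satisfying the condition (2-Rigid): for every epimorphism f₁ : X₁ → X₀ in X there exists a sequence X₃ → X₂ → X₁ → X₀ in X with each map a weak kernel of the next and a weak cokernel of the previous (i.e. f_{i+1} is a weak kernel of f_i and f_i is a weak cokernel of f_{i+1} for i = 1, 2). Then Ext¹_A(X, X') = 0 for all X, X' ∈ X, i.e. every short exact sequence 0 → X' → A → X → 0 in A with X, X' ∈ X splits. -/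
open CategoryTheory CategoryTheory.Limits

universe w v u

variable {A : Type u} [Category.{v} A] [Abelian A]

/-- If `X` is generating, cogenerating, functorially finite and satisfies (2-Rigid),
then every short exact sequence `0 ⟶ X' ⟶ E ⟶ X ⟶ 0` with `X, X' ∈ X` splits,
i.e. `Ext¹(X, X') = 0` for all `X, X' ∈ X`. -/
theorem ses_splits_of_two_rigid (X : Set A)
    (hgen : Generating X) (hcog : Cogenerating X) (hff : FunctoriallyFinite X)
    (hrigid : ∀ ⦃x₁ x₀ : A⦄, x₁ ∈ X → x₀ ∈ X → ∀ f₁ : x₁ ⟶ x₀, Epi f₁ →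
      ∃ (x₂ : A) (_ : x₂ ∈ X) (x₃ : A) (_ : x₃ ∈ X) (f₂ : x₂ ⟶ x₁) (f₃ : x₃ ⟶ x₂),
        IsWeakKernelIn X f₂ f₁ ∧ IsWeakCokernelIn X f₁ f₂ ∧
        IsWeakKernelIn X f₃ f₂ ∧ IsWeakCokernelIn X f₂ f₃)
    {x' E x : A} (hx' : x' ∈ X) (hx : x ∈ X)
    (i : x' ⟶ E) (p : E ⟶ x) (w : i ≫ p = 0)
    (hi : Mono i) (hp : Epi p) (hex : (ShortComplex.mk i p w).Exact) :
    ∃ r : E ⟶ x', i ≫ r = 𝟙 x' := by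
  -- Right X-approximation of E
  obtain ⟨Y, g, hY, happrox⟩ := hff.1 E
  -- g is epi since X is generating
  obtain ⟨z, hz, e', he'⟩ := hgen E
  obtain ⟨k0, hk0⟩ := happrox hz e'
  have hgepi : Epi g := by
    have : Epi (k0 ≫ g) := hk0 ▸ he'
    exact epi_of_epi k0 g
  -- the epi f₁ : Y ⟶ x in X
  have hf1epi : Epi (g ≫ p) := epi_comp g p
  obtain ⟨x₂, hx₂, x₃, hx₃, f₂, f₃, hwk21, hwc12, hwk32, hwc23⟩ :=
    hrigid hY hx (g ≫ p) hf1epi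
  -- factor i through g
  obtain ⟨j, hj⟩ := happrox hx' i
  have hjf1 : j ≫ (g ≫ p) = 0 := by rw [← Category.assoc, hj, w]
  -- factor j through the weak kernel f₂
  obtain ⟨m, hm⟩ := hwk21.2 hx' j hjf1
  -- f₂ ≫ g factors through the kernel i
  have hf2gp : (f₂ ≫ g) ≫ p = 0 := by rw [Category.assoc]; exact hwk21.1
  obtain ⟨q, hq⟩ := hex.lift' (f₂ ≫ g) hf2gp
  -- m ≫ q = 𝟙 x'
  have hmq : m ≫ q = 𝟙 x' := by
    rw [← cancel_mono i, Category.assoc, hq, ← Category.assoc, hm, hj, Category.id_comp]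
  -- f₃ ≫ q = 0, so q factors through the weak cokernel f₂ as t : Y ⟶ x'
  have hf3q : f₃ ≫ q = 0 := by
    rw [← cancel_mono i, Category.assoc, hq, ← Category.assoc, hwk32.1, zero_comp, zero_comp]
  obtain ⟨t, ht⟩ := hwc23.2 hx' q hf3q
  -- j ≫ t = 𝟙 x'
  have hjt : j ≫ t = 𝟙 x' := by rw [← hm, Category.assoc, ht, hmq]
  -- kernel.ι g ≫ t = 0
  obtain ⟨Z, hZ, e, heepi⟩ := hgen (kernel g)
  have hkt : kernel.ι g ≫ t = 0 := by
    rw [← cancel_epi e]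
    have h1 : (e ≫ kernel.ι g) ≫ (g ≫ p) = 0 := by
      rw [← Category.assoc, Category.assoc _ _ g, kernel.condition, comp_zero, zero_comp]
    obtain ⟨n, hn⟩ := hwk21.2 hZ (e ≫ kernel.ι g) h1
    have hnq : n ≫ q = 0 := by
      rw [← cancel_mono i, Category.assoc, hq, ← Category.assoc, hn,
        Category.assoc, kernel.condition, comp_zero, zero_comp]
    rw [← Category.assoc, ← hn, Category.assoc, ht, hnq, comp_zero]
  -- descend t along the epi g
  refine ⟨Abelian.epiDesc g t hkt, ?_⟩
  rw [← hj, Category.assoc, Abelian.comp_epiDesc, hjt]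
end

section
/- Let A be an abelian category and X ⊆ A a generating, cogenerating, functorially finite full additive subcategory closed under direct summands with Ext^i_A(X, X') = 0 for 1 ≤ i ≤ d−1 and X, X' ∈ X. Suppose that for every object A of A there exist exact sequences 0 → A → X_{-1} → ⋯ → X_{-d} → 0 and 0 → X'_d → ⋯ → X'_1 → A → 0 with all X_{-i}, X'_i ∈ X. Then X is d-cluster tilting: X = {A ∈ A : Ext^i_A(A, X) = 0 for 1 ≤ i ≤ d−1, all X ∈ X} = {A ∈ A : Ext^i_A(X, A) = 0 for 1 ≤ i ≤ d−1, all X ∈ X}. -/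
open CategoryTheory CategoryTheory.Limits

universe w v u

variable {A : Type u} [Category.{v} A] [Abelian A]

section MyAuxiliary

open CategoryTheory.Abelian CategoryTheory.Pretriangulated

section DerivedAux

variable [HasDerivedCategory A]

/-- The composition of the single functor with the homology functor is the identity. -/
noncomputable def mySingleCompHomologyIso :
    DerivedCategory.singleFunctor A 0 ⋙ DerivedCategory.homologyFunctor A 0 ≅ 𝟭 A :=
  Functor.isoWhiskerRight (asIso ((DerivedCategory.singleFunctorsPostcompQIso A).hom.hom 0))
      (DerivedCategory.homologyFunctor A 0) ≪≫
    Functor.associator _ _ _ ≪≫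
    Functor.isoWhiskerLeft (CochainComplex.singleFunctor A 0)
      (DerivedCategory.homologyFunctorFactors A 0) ≪≫
    HomologicalComplex.homologyFunctorSingleIso A (ComplexShape.up ℤ) 0

end DerivedAux

variable [HasExt.{w} A]

/-- Lift along an epi when the relevant `Ext¹` vanishes. -/
lemma my_exists_lift {S : ShortComplex A} (hS : S.ShortExact) {T : A}
    (h1 : Subsingleton (Ext.{w} T S.X₁ 1)) (f : T ⟶ S.X₃) :
    ∃ s : T ⟶ S.X₂, s ≫ S.g = f := by
  letI := HasDerivedCategory.standard A
  have hz : ((Ext.mk₀ f).comp hS.extClass (zero_add 1)) = 0 := Subsingleton.elim _ _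
  have hz' : (DerivedCategory.singleFunctor A 0).map f ≫ hS.singleδ = 0 := by
    have h2 := congrArg Ext.hom hz
    rw [Ext.comp_hom, Ext.mk₀_hom, hS.extClass_hom, Ext.zero_hom,
      ShiftedHom.mk₀_comp] at h2
    exact h2
  obtain ⟨σ, hσ⟩ := Triangle.coyoneda_exact₃ _ hS.singleTriangle_distinguished
    ((DerivedCategory.singleFunctor A 0).map f) hz'
  let ι := mySingleCompHomologyIso (A := A)
  refine ⟨ι.inv.app T ≫ (DerivedCategory.homologyFunctor A 0).map σ ≫ ι.hom.app S.X₂, ?_⟩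
  have nat := ι.hom.naturality S.g
  dsimp at nat
  have e : (ι.inv.app T ≫ (DerivedCategory.homologyFunctor A 0).map σ ≫ ι.hom.app S.X₂) ≫ S.g
      = ι.inv.app T ≫ (DerivedCategory.homologyFunctor A 0).map σ ≫ ι.hom.app S.X₂ ≫ S.g :=
    (Category.assoc _ _ _).trans (congrArg (ι.inv.app T ≫ ·) (Category.assoc _ _ _))
  have hσ' : σ ≫ (DerivedCategory.singleFunctor A 0).map S.g
      = (DerivedCategory.singleFunctor A 0).map f := hσ.symm
  have nat2 := ι.hom.naturality f
  dsimp at nat2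
  calc (ι.inv.app T ≫ (DerivedCategory.homologyFunctor A 0).map σ ≫ ι.hom.app S.X₂) ≫ S.g
      = ι.inv.app T ≫ (DerivedCategory.homologyFunctor A 0).map σ ≫ ι.hom.app S.X₂ ≫ S.g := e
    _ = ι.inv.app T ≫ (DerivedCategory.homologyFunctor A 0).map σ ≫
          (DerivedCategory.homologyFunctor A 0).map ((DerivedCategory.singleFunctor A 0).map S.g) ≫
            ι.hom.app S.X₃ :=
        congrArg (fun t => ι.inv.app T ≫ (DerivedCategory.homologyFunctor A 0).map σ ≫ t) nat.symm
    _ = ι.inv.app T ≫ (DerivedCategory.homologyFunctor A 0).map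
          (σ ≫ (DerivedCategory.singleFunctor A 0).map S.g) ≫ ι.hom.app S.X₃ :=
        congrArg (fun t => ι.inv.app T ≫ t)
          ((DerivedCategory.homologyFunctor A 0).map_comp_assoc _ _ _).symm
    _ = ι.inv.app T ≫ (DerivedCategory.homologyFunctor A 0).map
          ((DerivedCategory.singleFunctor A 0).map f) ≫ ι.hom.app S.X₃ :=
        congrArg (fun t => ι.inv.app T ≫ (DerivedCategory.homologyFunctor A 0).map t ≫
          ι.hom.app S.X₃) hσ'
    _ = ι.inv.app T ≫ ι.hom.app T ≫ f := congrArg (fun t => ι.inv.app T ≫ t) nat2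
    _ = f := Iso.inv_hom_id_app_assoc _ _ _

/-- Extend along a mono when the relevant `Ext¹` vanishes. -/
lemma my_exists_extend {S : ShortComplex A} (hS : S.ShortExact) {T : A}
    (h1 : Subsingleton (Ext.{w} S.X₃ T 1)) (f : S.X₁ ⟶ T) :
    ∃ r : S.X₂ ⟶ T, S.f ≫ r = f := by
  letI := HasDerivedCategory.standard A
  have hz : (hS.extClass.comp (Ext.mk₀ f) (add_zero 1)) = 0 := Subsingleton.elim _ _
  have hz' : hS.singleδ ≫ ((DerivedCategory.singleFunctor A 0).map f)⟦(1:ℤ)⟧' = 0 := by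
    have h2 := congrArg Ext.hom hz
    rw [Ext.comp_hom, Ext.mk₀_hom, hS.extClass_hom, Ext.zero_hom,
      ShiftedHom.comp_mk₀] at h2
    exact h2
  obtain ⟨b, hb, -⟩ := complete_distinguished_triangle_morphism₂ hS.singleTriangle
    (contractibleTriangle ((DerivedCategory.singleFunctor A 0).obj T))
    hS.singleTriangle_distinguished (contractible_distinguished _)
    ((DerivedCategory.singleFunctor A 0).map f) 0 (hz'.trans comp_zero.symm)
  -- hb : mor₁ ≫ b = map f ≫ 𝟙
  let ι := mySingleCompHomologyIso (A := A)
  refine ⟨ι.inv.app S.X₂ ≫ (DerivedCategory.homologyFunctor A 0).map b ≫ ι.hom.app T, ?_⟩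
  have nat := ι.inv.naturality S.f
  dsimp at nat
  rw [← Category.assoc S.f, nat]
  have hb' : (DerivedCategory.singleFunctor A 0).map S.f ≫ b
      = (DerivedCategory.singleFunctor A 0).map f := by
    exact hb.trans (Category.comp_id _)
  erw [Category.assoc, ← Functor.map_comp_assoc (DerivedCategory.homologyFunctor A 0), hb']
  have nat2 := ι.hom.naturality f
  dsimp at nat2
  erw [nat2]
  rw [Iso.inv_hom_id_app_assoc]

/-- Covariant dimension-shift (descent). -/
lemma my_descent_cov {S : ShortComplex A} (hS : S.ShortExact) {T : A} {n : ℕ}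
    (h2 : Subsingleton (Ext.{w} T S.X₂ n))
    (h1 : Subsingleton (Ext.{w} T S.X₁ (n + 1))) :
    Subsingleton (Ext.{w} T S.X₃ n) := by
  refine ⟨fun x y => ?_⟩
  suffices h : ∀ z : Ext.{w} T S.X₃ n, z = 0 by rw [h x, h y]
  intro z
  obtain ⟨x₂, hx₂⟩ := Ext.covariant_sequence_exact₃ T hS z rfl (Subsingleton.elim _ _)
  rw [← hx₂, Subsingleton.elim x₂ 0, Ext.zero_comp]

/-- Contravariant dimension-shift (descent). -/
lemma my_descent_contra {S : ShortComplex A} (hS : S.ShortExact) {T : A} {n : ℕ}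
    (h2 : Subsingleton (Ext.{w} S.X₂ T n))
    (h1 : Subsingleton (Ext.{w} S.X₃ T (n + 1))) :
    Subsingleton (Ext.{w} S.X₁ T n) := by
  refine ⟨fun x y => ?_⟩
  suffices h : ∀ z : Ext.{w} S.X₁ T n, z = 0 by rw [h x, h y]
  intro z
  obtain ⟨x₂, hx₂⟩ := Ext.contravariant_sequence_exact₁ hS T z
    (by omega : 1 + n = n + 1) (Subsingleton.elim _ _)
  rw [← hx₂, Subsingleton.elim x₂ 0, Ext.comp_zero]

section SES

variable {a b c : A}

omit [HasExt.{w} A] in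
/-- `0 → ker f → b → a → 0` for an epi `f`. -/
lemma my_ses_epi (f : b ⟶ a) [Epi f] :
    (ShortComplex.mk (kernel.ι f) f (kernel.condition f)).ShortExact where
  exact := ShortComplex.exact_of_f_is_kernel _ (kernelIsKernel f)

omit [HasExt.{w} A] in
/-- `0 → a → b → coker f → 0` for a mono `f`. -/
lemma my_ses_mono (f : a ⟶ b) [Mono f] :
    (ShortComplex.mk f (cokernel.π f) (cokernel.condition f)).ShortExact where
  exact := ShortComplex.exact_of_g_is_cokernel _ (cokernelIsCokernel f)

omit [HasExt.{w} A] in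
/-- `0 → ker g → c → ker f → 0` given exactness of `(g, f)`. -/
lemma my_ses_syzygy (g : c ⟶ b) (f : b ⟶ a) (w : g ≫ f = 0)
    (hex : (ShortComplex.mk g f w).Exact) :
    (ShortComplex.mk (kernel.ι g) (kernel.lift f g w)
      (by rw [← cancel_mono (kernel.ι f), Category.assoc, kernel.lift_ι, zero_comp,
        kernel.condition])).ShortExact where
  exact := by
    apply ShortComplex.exact_of_f_is_kernel
    refine KernelFork.IsLimit.ofι _ _
      (fun {W'} l hl => kernel.lift g l ?_) (fun {W'} l hl => by simp) ?_
    · have hl' : l ≫ kernel.lift f g w = 0 := hl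
      rw [← kernel.lift_ι f g w, ← Category.assoc, hl', zero_comp]
    · intro W' l hl m hm
      rw [← cancel_mono (kernel.ι g), kernel.lift_ι, ← hm]
  epi_g := by
    have := (ShortComplex.exact_iff_epi_kernel_lift (ShortComplex.mk g f w)).1 hex
    exact this

omit [HasExt.{w} A] in
/-- `0 → coker f → b → coker g → 0` given exactness of `(f, g)`. -/
lemma my_ses_cosyzygy (f : a ⟶ b) (g : b ⟶ c) (w : f ≫ g = 0)
    (hex : (ShortComplex.mk f g w).Exact) :
    (ShortComplex.mk (cokernel.desc f g w) (cokernel.π g)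
      (by rw [← cancel_epi (cokernel.π f), ← Category.assoc, cokernel.π_desc, comp_zero,
        cokernel.condition])).ShortExact where
  exact := by
    apply ShortComplex.exact_of_g_is_cokernel
    refine CokernelCofork.IsColimit.ofπ _ _
      (fun {Z'} l hl => cokernel.desc g l ?_) (fun {Z'} l hl => by simp) ?_
    · have hl' : cokernel.desc f g w ≫ l = 0 := hl
      rw [← cokernel.π_desc f g w, Category.assoc, hl', comp_zero]
    · intro Z' l hl m hm
      rw [← cancel_epi (cokernel.π g), cokernel.π_desc, ← hm]
  mono_f := by
    have := (ShortComplex.exact_iff_mono_cokernel_desc (ShortComplex.mk f g w)).1 hex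
    exact this

end SES

end MyAuxiliary

/-- If `X` is generating, cogenerating, functorially finite, closed under isomorphisms
and direct summands, `(d-1)`-rigid, and every object of `A` admits both a
`d`-coresolution and a `d`-resolution by objects of `X`, then `X` is `d`-cluster
tilting: it coincides with both of its `(d-1)`-fold Ext-perpendicular categories. -/
theorem d_cluster_tilting_of_resolutions [CategoryTheory.HasExt.{w} A]
    (X : Set A) (d : ℕ) (hd : 1 ≤ d)
    (hiso : ∀ ⦃a b : A⦄, a ∈ X → (a ≅ b) → b ∈ X)
    (hsum : ∀ ⦃a x : A⦄, x ∈ X → ∀ (i : a ⟶ x) (r : x ⟶ a), i ≫ r = 𝟙 a → a ∈ X)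
    (hgen : Generating X) (hcog : Cogenerating X) (hff : FunctoriallyFinite X)
    (hext : ∀ x ∈ X, ∀ x' ∈ X, ∀ i : ℕ, 1 ≤ i → i ≤ d - 1 →
      Subsingleton (CategoryTheory.Abelian.Ext x x' i))
    (hcores : ∀ a : A,
      ∃ (Y : ℕ → A) (g : ∀ i, Y i ⟶ Y (i + 1)) (_ : Y 0 = a),
        (∀ i, 1 ≤ i → i ≤ d → Y i ∈ X) ∧ Mono (g 0) ∧ Epi (g (d - 1)) ∧
        ∀ i, i + 2 ≤ d → ∃ w : g i ≫ g (i + 1) = 0,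
          (ShortComplex.mk (g i) (g (i + 1)) w).Exact)
    (hres : ∀ a : A,
      ∃ (Z : ℕ → A) (h : ∀ i, Z (i + 1) ⟶ Z i) (_ : Z 0 = a),
        (∀ i, 1 ≤ i → i ≤ d → Z i ∈ X) ∧ Epi (h 0) ∧ Mono (h (d - 1)) ∧
        ∀ i, i + 2 ≤ d → ∃ w : h (i + 1) ≫ h i = 0,
          (ShortComplex.mk (h (i + 1)) (h i) w).Exact) :
    X = {a : A | ∀ i : ℕ, 1 ≤ i → i ≤ d - 1 → ∀ x ∈ X,
          Subsingleton (CategoryTheory.Abelian.Ext a x i)} ∧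
    X = {a : A | ∀ i : ℕ, 1 ≤ i → i ≤ d - 1 → ∀ x ∈ X,
          Subsingleton (CategoryTheory.Abelian.Ext x a i)} := by
  constructor
  · apply Set.Subset.antisymm
    · intro a ha i h1 h2 x hx
      exact hext a ha x hx i h1 h2
    · intro a ha
      simp only [Set.mem_setOf_eq] at ha
      obtain ⟨Z, h, hZ0, hZX, hepi, hmono, hexact⟩ := hres a
      subst hZ0
      by_cases hd1 : d = 1
      · subst hd1
        haveI := hepi
        haveI : Mono (h 0) := hmono
        haveI : IsIso (h 0) := isIso_of_mono_of_epi _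
        exact hiso (hZX 1 le_rfl le_rfl) (asIso (h 0))
      · have hd2 : 2 ≤ d := by omega
        have key : ∀ k j, j + k = d - 2 →
            Subsingleton (Abelian.Ext.{w} (Z 0) (kernel (h j)) (j + 1)) := by
          intro k
          induction k with
          | zero =>
            intro j hj
            have hj' : j = d - 2 := by omega
            subst hj'
            obtain ⟨w, hex⟩ := hexact (d - 2) (by omega)
            have memZ : Z (d - 2 + 1 + 1) ∈ X := hZX _ (by omega) (by omega)
            haveI hm : Mono (h (d - 2 + 1)) := by
              have e : d - 2 + 1 = d - 1 := by omega
              rw [e]; exact hmono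
            haveI : Mono (kernel.lift (h (d - 2)) (h (d - 2 + 1)) w ≫ kernel.ι (h (d - 2))) := by
              rw [kernel.lift_ι]; exact hm
            haveI : Mono (kernel.lift (h (d - 2)) (h (d - 2 + 1)) w) :=
              mono_of_mono _ (kernel.ι (h (d - 2)))
            haveI : Epi (kernel.lift (h (d - 2)) (h (d - 2 + 1)) w) :=
              (ShortComplex.exact_iff_epi_kernel_lift _).1 hex
            haveI : IsIso (kernel.lift (h (d - 2)) (h (d - 2 + 1)) w) :=
              isIso_of_mono_of_epi _
            have memK : kernel (h (d - 2)) ∈ X :=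
              hiso memZ (asIso (kernel.lift (h (d - 2)) (h (d - 2 + 1)) w))
            exact ha (d - 2 + 1) (by omega) (by omega) _ memK
          | succ k ih =>
            intro j hj
            obtain ⟨w, hex⟩ := hexact j (by omega)
            exact my_descent_cov (my_ses_syzygy (h (j + 1)) (h j) w hex)
              (ha (j + 1) (by omega) (by omega) (Z (j + 2)) (hZX (j + 2) (by omega) (by omega)))
              (ih (j + 1) (by omega))
        have key0 := key (d - 2) 0 (by omega)
        haveI := hepi
        obtain ⟨s, hs⟩ := my_exists_lift (my_ses_epi (h 0)) key0 (𝟙 (Z 0))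
        exact hsum (hZX 1 (by omega) (by omega)) s (h 0) hs
  · apply Set.Subset.antisymm
    · intro a ha i h1 h2 x hx
      exact hext x hx a ha i h1 h2
    · intro a ha
      simp only [Set.mem_setOf_eq] at ha
      obtain ⟨Y, g, hY0, hYX, hmono, hepi, hexact⟩ := hcores a
      subst hY0
      by_cases hd1 : d = 1
      · subst hd1
        haveI := hmono
        haveI : Epi (g 0) := hepi
        haveI : IsIso (g 0) := isIso_of_mono_of_epi _
        exact hiso (hYX 1 le_rfl le_rfl) (asIso (g 0)).symm
      · have hd2 : 2 ≤ d := by omega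
        have key : ∀ k j, j + k = d - 2 →
            Subsingleton (Abelian.Ext.{w} (cokernel (g j)) (Y 0) (j + 1)) := by
          intro k
          induction k with
          | zero =>
            intro j hj
            have hj' : j = d - 2 := by omega
            subst hj'
            obtain ⟨w, hex⟩ := hexact (d - 2) (by omega)
            have memY : Y (d - 2 + 1 + 1) ∈ X := hYX _ (by omega) (by omega)
            haveI he : Epi (g (d - 2 + 1)) := by
              have e : d - 2 + 1 = d - 1 := by omega
              rw [e]; exact hepi
            haveI : Epi (cokernel.π (g (d - 2)) ≫
                cokernel.desc (g (d - 2)) (g (d - 2 + 1)) w) := by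
              rw [cokernel.π_desc]; exact he
            haveI : Epi (cokernel.desc (g (d - 2)) (g (d - 2 + 1)) w) :=
              epi_of_epi (cokernel.π (g (d - 2))) _
            haveI : Mono (cokernel.desc (g (d - 2)) (g (d - 2 + 1)) w) :=
              (ShortComplex.exact_iff_mono_cokernel_desc _).1 hex
            haveI : IsIso (cokernel.desc (g (d - 2)) (g (d - 2 + 1)) w) :=
              isIso_of_mono_of_epi _
            have memC : cokernel (g (d - 2)) ∈ X :=
              hiso memY (asIso (cokernel.desc (g (d - 2)) (g (d - 2 + 1)) w)).symm
            exact ha (d - 2 + 1) (by omega) (by omega) _ memC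
          | succ k ih =>
            intro j hj
            obtain ⟨w, hex⟩ := hexact j (by omega)
            exact my_descent_contra (my_ses_cosyzygy (g j) (g (j + 1)) w hex)
              (ha (j + 1) (by omega) (by omega) (Y (j + 2)) (hYX (j + 2) (by omega) (by omega)))
              (ih (j + 1) (by omega))
        have key0 := key (d - 2) 0 (by omega)
        haveI := hmono
        obtain ⟨r, hr⟩ := my_exists_extend (my_ses_mono (g 0)) key0 (𝟙 (Y 0))
        exact hsum (hYX 1 (by omega) (by omega)) (g 0) r hr
end
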